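/- arXiv:2110.14842 — 2 statements merged into one kernel-verified Lean document; each statement's English description precedes it below -/
import Mathlib

section
/- Let N, M be quantum channels from matrices on A to matrices on B, let ε ∈ (0,1) and n ≥ 1. For every finite reference type R and every density matrix ψ on R^n × A^n, there exist a finite type R̃ and a unit vector |φ⟩ in the n-fold tensor power of ℂ^{R̃×A} that is fixed by every permutation of the n tensor factors (i.e., |φ⟩ lies in the symmetric subspace Sym^n(R̃×A)) such that D_H^ε((id ⊗ N^{⊗n})(ψ) ‖ (id ⊗ M^{⊗n})(ψ)) ≤ D_H^ε((id ⊗ N^{⊗n})(|φ⟩⟨φ|) ‖ (id ⊗ M^{⊗n})(|φ⟩⟨φ|)). -/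
open scoped Kronecker ComplexOrder Classical

noncomputable section

/-- Square complex matrices indexed by `ι`. -/
abbrev MatC (ι : Type*) := Matrix ι ι ℂ

/-- A density matrix: positive semidefinite with trace one. -/
def IsDensity {ι : Type*} [Fintype ι] (ρ : MatC ι) : Prop :=
  ρ.PosSemidef ∧ ρ.trace = 1

/-- Functional calculus for Hermitian matrices (junk value `0` otherwise). -/
def funCalc {ι : Type*} [Fintype ι] [DecidableEq ι] (X : MatC ι) (f : ℝ → ℝ) : MatC ι :=
  if hX : X.IsHermitian then
    (hX.eigenvectorUnitary : MatC ι) * Matrix.diagonal (fun i => (f (hX.eigenvalues i) : ℂ)) *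
      star (hX.eigenvectorUnitary : MatC ι)
  else 0

/-- Real matrix power by functional calculus, with the convention `0 ^ t = 0`
(powers taken on the support). -/
def matPow {ι : Type*} [Fintype ι] [DecidableEq ι] (X : MatC ι) (t : ℝ) : MatC ι :=
  funCalc X fun x => if x ≤ 0 then 0 else Real.rpow x t

/-- Base-2 matrix logarithm by functional calculus on the support. -/
def matLog2 {ι : Type*} [Fintype ι] [DecidableEq ι] (X : MatC ι) : MatC ι :=
  funCalc X fun x => if x ≤ 0 then 0 else Real.logb 2 x

/-- Trace of the positive part of a Hermitian matrix: the sum of its nonnegative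
eigenvalues (junk value `0` for non-Hermitian input). -/
def trPos {ι : Type*} [Fintype ι] [DecidableEq ι] (X : MatC ι) : ℝ :=
  if hX : X.IsHermitian then ∑ i, max (hX.eigenvalues i) 0 else 0

/-- Largest eigenvalue (operator norm for PSD matrices). -/
def maxEig {ι : Type*} [Fintype ι] [DecidableEq ι] (X : MatC ι) : ℝ :=
  if hX : X.IsHermitian then ⨆ i, hX.eigenvalues i else 0

/-- Support inclusion `supp ρ ⊆ supp σ`, expressed via kernels. -/
def SuppLe {ι : Type*} [Fintype ι] (ρ σ : MatC ι) : Prop :=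
  ∀ v : ι → ℂ, σ.mulVec v = 0 → ρ.mulVec v = 0

/-- `−log₂` with the convention `−log₂ 0 = +∞`, valued in extended reals. -/
def negLog2 (x : ℝ) : EReal := if x ≤ 0 then ⊤ else ((-Real.logb 2 x : ℝ) : EReal)

/-- `log₂` with the convention `log₂ 0 = −∞`, valued in extended reals. -/
def elog2 (x : ℝ) : EReal := if x ≤ 0 then ⊥ else ((Real.logb 2 x : ℝ) : EReal)

/-! ### Channels -/

/-- The Kronecker extension `id_R ⊗ N` of a linear map on matrices. -/
def idTensor (R : Type*) {A B : Type*} (N : MatC A →ₗ[ℂ] MatC B) :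
    MatC (R × A) →ₗ[ℂ] MatC (R × B) where
  toFun X := Matrix.of fun p q => N (Matrix.of fun a a' => X (p.1, a) (q.1, a')) p.2 q.2
  map_add' X Y := by
    ext p q
    show N (Matrix.of fun a a' => (X + Y) (p.1, a) (q.1, a')) p.2 q.2 = _
    have h : (Matrix.of fun a a' => (X + Y) (p.1, a) (q.1, a'))
        = (Matrix.of fun a a' => X (p.1, a) (q.1, a'))
          + (Matrix.of fun a a' => Y (p.1, a) (q.1, a')) := rfl
    rw [h, map_add]; rfl
  map_smul' c X := by
    ext p q
    show N (Matrix.of fun a a' => (c • X) (p.1, a) (q.1, a')) p.2 q.2 = _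
    have h : (Matrix.of fun a a' => (c • X) (p.1, a) (q.1, a'))
        = c • (Matrix.of fun a a' => X (p.1, a) (q.1, a')) := rfl
    rw [h, map_smul]; rfl

/-- The Kronecker extension `N ⊗ id_R`. -/
def tensorId (R : Type*) {A B : Type*} (N : MatC A →ₗ[ℂ] MatC B) :
    MatC (A × R) →ₗ[ℂ] MatC (B × R) where
  toFun X := Matrix.of fun p q => N (Matrix.of fun a a' => X (a, p.2) (a', q.2)) p.1 q.1
  map_add' X Y := by
    ext p q
    show N (Matrix.of fun a a' => (X + Y) (a, p.2) (a', q.2)) p.1 q.1 = _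
    have h : (Matrix.of fun a a' => (X + Y) (a, p.2) (a', q.2))
        = (Matrix.of fun a a' => X (a, p.2) (a', q.2))
          + (Matrix.of fun a a' => Y (a, p.2) (a', q.2)) := rfl
    rw [h, map_add]; rfl
  map_smul' c X := by
    ext p q
    show N (Matrix.of fun a a' => (c • X) (a, p.2) (a', q.2)) p.1 q.1 = _
    have h : (Matrix.of fun a a' => (c • X) (a, p.2) (a', q.2))
        = c • (Matrix.of fun a a' => X (a, p.2) (a', q.2)) := rfl
    rw [h, map_smul]; rfl

/-- Transport of a matrix map along equivalences of index types. -/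
def reindexChan {A A' B B' : Type*} (eA : A ≃ A') (eB : B ≃ B')
    (N : MatC A →ₗ[ℂ] MatC B) : MatC A' →ₗ[ℂ] MatC B' :=
  (Matrix.reindexLinearEquiv ℂ ℂ eB eB).toLinearMap ∘ₗ N ∘ₗ
    (Matrix.reindexLinearEquiv ℂ ℂ eA.symm eA.symm).toLinearMap

/-- The tensor product `N ⊗ M` of two matrix maps. -/
def tensorChan {A B C D : Type*} (N : MatC A →ₗ[ℂ] MatC B) (M : MatC C →ₗ[ℂ] MatC D) :
    MatC (A × C) →ₗ[ℂ] MatC (B × D) :=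
  tensorId D N ∘ₗ idTensor A M

/-- The `n`-fold tensor power `N^{⊗n}` of a matrix map, acting on matrices
indexed by `Fin n → A`. -/
def powChan {A B : Type*} (N : MatC A →ₗ[ℂ] MatC B) :
    (n : ℕ) → (MatC (Fin n → A) →ₗ[ℂ] MatC (Fin n → B))
  | 0 => reindexChan (Equiv.refl _) (Equiv.ofUnique (Fin 0 → A) (Fin 0 → B)) LinearMap.id
  | n + 1 =>
      reindexChan (Fin.insertNthEquiv (fun _ => A) 0) (Fin.insertNthEquiv (fun _ => B) 0)
        (tensorChan N (powChan N n))

/-- Complete positivity and trace preservation (a quantum channel). -/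
def IsCPTP {A B : Type*} [Fintype A] [Fintype B] (N : MatC A →ₗ[ℂ] MatC B) : Prop :=
  (∀ (R : Type) (fR : Fintype R) (X : MatC (R × A)),
      letI := fR
      X.PosSemidef → (idTensor R N X).PosSemidef) ∧
    ∀ X : MatC A, (N X).trace = X.trace

/-- The (unnormalized) maximally entangled projector `|Φ⟩⟨Φ|`. -/
def maxEnt (A : Type*) [DecidableEq A] : MatC (A × A) :=
  Matrix.of fun p q => (if p.1 = p.2 then (1 : ℂ) else 0) * (if q.1 = q.2 then 1 else 0)

/-- The Choi matrix `J_N = (id_A ⊗ N)(|Φ⟩⟨Φ|)`. -/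
def choiMat {A B : Type*} [DecidableEq A] (N : MatC A →ₗ[ℂ] MatC B) : MatC (A × B) :=
  idTensor A N (maxEnt A)

/-! ### State divergences -/

/-- The set of achievable Type II error values for tests with Type I error at most `ε`. -/
def betaSet {ι : Type*} [Fintype ι] [DecidableEq ι] (ε : ℝ) (ρ σ : MatC ι) : Set ℝ :=
  {x | ∃ T : MatC ι, T.PosSemidef ∧ (1 - T).PosSemidef ∧
    1 - ε ≤ ((T * ρ).trace).re ∧ x = ((T * σ).trace).re}

/-- The hypothesis testing relative entropy `D_H^ε(ρ‖σ)`, valued in extended reals. -/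
def DHe {ι : Type*} [Fintype ι] [DecidableEq ι] (ε : ℝ) (ρ σ : MatC ι) : EReal :=
  negLog2 (sInf (betaSet ε ρ σ))

/-- The Umegaki relative entropy `D(ρ‖σ)` (base 2), `+∞` if the support condition fails. -/
def relEnt {ι : Type*} [Fintype ι] [DecidableEq ι] (ρ σ : MatC ι) : EReal :=
  if SuppLe ρ σ then (((ρ * (matLog2 ρ - matLog2 σ)).trace).re : EReal) else ⊤

/-- The Petz Rényi divergence `D̄_α(ρ‖σ)` for `α ∈ (0,1)`, `+∞` when
`tr[ρ^α σ^{1−α}] = 0`. -/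
def petzD (α : ℝ) {ι : Type*} [Fintype ι] [DecidableEq ι] (ρ σ : MatC ι) : EReal :=
  if 0 < (((matPow ρ α * matPow σ (1 - α)).trace).re) then
    (((α - 1)⁻¹ * Real.logb 2 (((matPow ρ α * matPow σ (1 - α)).trace).re) : ℝ) : EReal)
  else ⊤

/-- The sandwiched Rényi divergence `D̃_α(ρ‖σ)` for `α > 1`. -/
def sandD (α : ℝ) {ι : Type*} [Fintype ι] [DecidableEq ι] (ρ σ : MatC ι) : EReal :=
  if SuppLe ρ σ then
    ((((α - 1)⁻¹ *
        Real.logb 2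
          (((matPow (matPow σ ((1 - α) / (2 * α)) * ρ * matPow σ ((1 - α) / (2 * α))) α).trace).re)) : ℝ) : EReal)
  else ⊤

/-- The max-relative entropy `D_max(ρ‖σ)`. -/
def Dmax {ι : Type*} [Fintype ι] (ρ σ : MatC ι) : EReal :=
  sInf {y : EReal | ∃ t : ℝ, ((t : ℂ) • σ - ρ).PosSemidef ∧ y = ((Real.logb 2 t : ℝ) : EReal)}

/-- Trace norm `‖X‖₁ = tr √(X†X)`. -/
def traceNorm {ι : Type*} [Fintype ι] [DecidableEq ι] (X : MatC ι) : ℝ :=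
  ((matPow (X.conjTranspose * X) 2⁻¹).trace).re

/-- Generalized fidelity of subnormalized states. -/
def genFid {ι : Type*} [Fintype ι] [DecidableEq ι] (ρ σ : MatC ι) : ℝ :=
  traceNorm (matPow ρ 2⁻¹ * matPow σ 2⁻¹) +
    Real.sqrt ((1 - (ρ.trace).re) * (1 - (σ.trace).re))

/-- Purified distance. -/
def purDist {ι : Type*} [Fintype ι] [DecidableEq ι] (ρ σ : MatC ι) : ℝ :=
  Real.sqrt (1 - (genFid ρ σ) ^ 2)

/-- The smooth max-relative entropy `D_max^ε(ρ‖σ)`. -/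
def DmaxSmooth (ε : ℝ) {ι : Type*} [Fintype ι] [DecidableEq ι] (ρ σ : MatC ι) : EReal :=
  sInf {y : EReal | ∃ ρ' : MatC ι, ρ'.PosSemidef ∧ ((ρ'.trace).re ≤ 1) ∧
    purDist ρ' ρ ≤ ε ∧ y = Dmax ρ' σ}

/-! ### Channel divergences -/

/-- A generalized state divergence: a function on pairs of matrices over every
finite system. -/
abbrev StateDiv :=
  ∀ (ι : Type) (_ : Fintype ι) (_ : DecidableEq ι), MatC ι → MatC ι → EReal

/-- The Umegaki relative entropy as a `StateDiv`. -/
def UmegakiD : StateDiv := fun ι fι dι ρ σ => @relEnt ι fι dι ρ σ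

/-- The sandwiched Rényi divergence as a `StateDiv`. -/
def SandD (α : ℝ) : StateDiv := fun ι fι dι ρ σ => @sandD α ι fι dι ρ σ

/-- The Petz Rényi divergence as a `StateDiv`. -/
def PetzD (α : ℝ) : StateDiv := fun ι fι dι ρ σ => @petzD α ι fι dι ρ σ

/-- The smooth max-relative entropy as a `StateDiv`. -/
def DmaxD (ε : ℝ) : StateDiv := fun ι fι dι ρ σ => @DmaxSmooth ε ι fι dι ρ σ

/-- The hypothesis-testing relative entropy as a `StateDiv`. -/
def DHD (ε : ℝ) : StateDiv := fun ι fι dι ρ σ => @DHe ι fι dι ε ρ σ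

/-- The channel divergence induced by a state divergence: supremum over all
finite reference systems `R` and input states `ψ` on `R × A`. -/
def chanDiv (D : StateDiv) {A B : Type} [Fintype A] [Fintype B] [DecidableEq B]
    (N M : MatC A →ₗ[ℂ] MatC B) : EReal :=
  sSup {x : EReal | ∃ (R : Type) (fR : Fintype R) (dR : DecidableEq R)
    (ψ : MatC (R × A)),
      letI := fR; letI := dR;
      IsDensity ψ ∧
        x = D (R × B) inferInstance inferInstance (idTensor R N ψ) (idTensor R M ψ)}

/-- The regularized channel divergence `sup_{n ≥ 1} (1/n) D(N^{⊗n}‖M^{⊗n})`. -/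
def regChanDiv (D : StateDiv) {A B : Type} [Fintype A] [Fintype B] [DecidableEq B]
    (N M : MatC A →ₗ[ℂ] MatC B) : EReal :=
  sSup {x : EReal | ∃ n : ℕ, 1 ≤ n ∧
    x = (((n : ℝ)⁻¹ : ℝ) : EReal) * chanDiv D (powChan N n) (powChan M n)}

/-- The amortized channel divergence. -/
def amortChanDiv (D : StateDiv) {A B : Type} [Fintype A] [Fintype B] [DecidableEq A]
    [DecidableEq B] (N M : MatC A →ₗ[ℂ] MatC B) : EReal :=
  sSup {x : EReal | ∃ (R : Type) (fR : Fintype R) (dR : DecidableEq R)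
    (ψ φ : MatC (R × A)),
      letI := fR; letI := dR;
      IsDensity ψ ∧ IsDensity φ ∧
        x = D (R × B) inferInstance inferInstance (idTensor R N ψ) (idTensor R M φ)
            - D (R × A) inferInstance inferInstance ψ φ}


/-! ### Discrimination strategies -/

/-- Tensor product of matrices over a (dependent) family of systems. -/
def piKron {n : ℕ} {κ : Fin n → Type} (X : ∀ i, MatC (κ i)) : MatC (∀ i, κ i) :=
  Matrix.of fun f g => ∏ i, X i (f i) (g i)

/-- A coherent (parallel) strategy for discriminating `n` uses of channels
`A → B`: a reference system `R`, an input state on `R × A^n` and a binary test. -/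
structure CohStrategy (A B : Type) [Fintype A] [DecidableEq A] [Fintype B] [DecidableEq B]
    (n : ℕ) where
  R : Type
  [fR : Fintype R]
  [dR : DecidableEq R]
  ψ : MatC (R × (Fin n → A))
  hψ : IsDensity ψ
  T : MatC (R × (Fin n → B))
  hT₁ : T.PosSemidef
  hT₂ : (1 - T).PosSemidef

attribute [instance] CohStrategy.fR CohStrategy.dR

/-- Type I error of a coherent strategy against the null hypothesis channel `N`. -/
def CohStrategy.typeI {A B : Type} [Fintype A] [DecidableEq A] [Fintype B] [DecidableEq B]
    {n : ℕ} (N : MatC A →ₗ[ℂ] MatC B) (S : CohStrategy A B n) : ℝ :=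
  (((1 - S.T) * idTensor S.R (powChan N n) S.ψ).trace).re

/-- Type II error of a coherent strategy against the alternative channel `M`. -/
def CohStrategy.typeII {A B : Type} [Fintype A] [DecidableEq A] [Fintype B] [DecidableEq B]
    {n : ℕ} (M : MatC A →ₗ[ℂ] MatC B) (S : CohStrategy A B n) : ℝ :=
  ((S.T * idTensor S.R (powChan M n) S.ψ).trace).re

/-- **Conjecture 1** (exponentially strong converse of channel hypothesis testing
under coherent strategies). -/
def Conjecture1 : Prop :=
  ∀ (A B : Type) (fA : Fintype A) (dA : DecidableEq A) (fB : Fintype B) (dB : DecidableEq B),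
    letI := fA; letI := dA; letI := fB; letI := dB;
    ∀ (N M : MatC A →ₗ[ℂ] MatC B), IsCPTP N → IsCPTP M → (choiMat N).PosDef →
      ∀ S : (n : ℕ) → CohStrategy A B n,
        regChanDiv UmegakiD N M <
          Filter.liminf
            (fun n : ℕ => -((((n : ℝ)⁻¹ : ℝ) : EReal) * elog2 ((S n).typeII M)))
            Filter.atTop →
        ∃ c : ℝ, 0 < c ∧ ∀ᶠ n : ℕ in Filter.atTop,
          1 - (S n).typeI N ≤ (2 : ℝ) ^ (-(c * n))


/-- A sequential (adaptive) strategy for discriminating `m + 1` uses of channels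
`A → B`: reference systems `R 0, …, R m`, an initial state on `R 0 × A`, adaptive
update channels `P i : R i × B → R (i+1) × A`, and a final binary test. -/
structure SeqStrategy (A B : Type) [Fintype A] [DecidableEq A] [Fintype B] [DecidableEq B]
    (m : ℕ) where
  R : Fin (m + 1) → Type
  [fR : ∀ i, Fintype (R i)]
  [dR : ∀ i, DecidableEq (R i)]
  ψ : MatC (R 0 × A)
  hψ : IsDensity ψ
  P : ∀ i : Fin m, MatC (R i.castSucc × B) →ₗ[ℂ] MatC (R i.succ × A)
  hP : ∀ i, IsCPTP (P i)
  T : MatC (R (Fin.last m) × B)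
  hT₁ : T.PosSemidef
  hT₂ : (1 - T).PosSemidef

attribute [instance] SeqStrategy.fR SeqStrategy.dR

/-- The intermediate testing states of a sequential strategy when the unknown
channel is `N`: after `i + 1` uses of the channel, on system `R i × B`. -/
def SeqStrategy.states {A B : Type} [Fintype A] [DecidableEq A] [Fintype B] [DecidableEq B]
    {m : ℕ} (S : SeqStrategy A B m) (N : MatC A →ₗ[ℂ] MatC B) :
    ∀ i : Fin (m + 1), MatC (S.R i × B) :=
  Fin.induction (idTensor (S.R 0) N S.ψ)
    (fun i prev => idTensor (S.R i.succ) N (S.P i prev))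

/-- The final testing state of a sequential strategy for channel `N`. -/
def SeqStrategy.finalState {A B : Type} [Fintype A] [DecidableEq A] [Fintype B]
    [DecidableEq B] {m : ℕ} (S : SeqStrategy A B m) (N : MatC A →ₗ[ℂ] MatC B) :
    MatC (S.R (Fin.last m) × B) :=
  S.states N (Fin.last m)

/-- Type I error of a sequential strategy against the null hypothesis channel `N`. -/
def SeqStrategy.typeI {A B : Type} [Fintype A] [DecidableEq A] [Fintype B] [DecidableEq B]
    {m : ℕ} (N : MatC A →ₗ[ℂ] MatC B) (S : SeqStrategy A B m) : ℝ :=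
  (((1 - S.T) * S.finalState N).trace).re

/-- Type II error of a sequential strategy against the alternative channel `M`. -/
def SeqStrategy.typeII {A B : Type} [Fintype A] [DecidableEq A] [Fintype B] [DecidableEq B]
    {m : ℕ} (M : MatC A →ₗ[ℂ] MatC B) (S : SeqStrategy A B m) : ℝ :=
  ((S.T * S.finalState M).trace).re

/-- A product strategy for discriminating `n` uses of channels `A → B`:
reference systems `R i`, product input states `φ i` on `R i × A`, and a binary
test on the joint output. -/
structure ProdStrategy (A B : Type) [Fintype A] [DecidableEq A] [Fintype B] [DecidableEq B]
    (n : ℕ) where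
  R : Fin n → Type
  [fR : ∀ i, Fintype (R i)]
  [dR : ∀ i, DecidableEq (R i)]
  φ : ∀ i, MatC (R i × A)
  hφ : ∀ i, IsDensity (φ i)
  T : MatC (∀ i, R i × B)
  hT₁ : T.PosSemidef
  hT₂ : (1 - T).PosSemidef

attribute [instance] ProdStrategy.fR ProdStrategy.dR

/-- The testing state of a product strategy for channel `N`. -/
def ProdStrategy.state {A B : Type} [Fintype A] [DecidableEq A] [Fintype B] [DecidableEq B]
    {n : ℕ} (S : ProdStrategy A B n) (N : MatC A →ₗ[ℂ] MatC B) : MatC (∀ i, S.R i × B) :=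
  piKron fun i => idTensor (S.R i) N (S.φ i)

/-- Type I error of a product strategy against the null hypothesis channel `N`. -/
def ProdStrategy.typeI {A B : Type} [Fintype A] [DecidableEq A] [Fintype B] [DecidableEq B]
    {n : ℕ} (N : MatC A →ₗ[ℂ] MatC B) (S : ProdStrategy A B n) : ℝ :=
  (((1 - S.T) * S.state N).trace).re

/-- Type II error of a product strategy against the alternative channel `M`. -/
def ProdStrategy.typeII {A B : Type} [Fintype A] [DecidableEq A] [Fintype B] [DecidableEq B]
    {n : ℕ} (M : MatC A →ₗ[ℂ] MatC B) (S : ProdStrategy A B n) : ℝ :=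
  ((S.T * S.state M).trace).re

/-- Extra: the `n`-fold power of a channel acting on matrices indexed by
`Fin n → R × A` (reference `R` paired with each channel input). -/
noncomputable def pairPow (R : Type) {A B : Type} (N : MatC A →ₗ[ℂ] MatC B) (n : ℕ) :
    MatC (Fin n → R × A) →ₗ[ℂ] MatC (Fin n → R × B) :=
  reindexChan (Equiv.arrowProdEquivProdArrow (Fin n) (fun _ => R) (fun _ => A)).symm
    (Equiv.arrowProdEquivProdArrow (Fin n) (fun _ => R) (fun _ => B)).symm
    (idTensor (Fin n → R) (powChan N n))

/-- The optimal hypothesis-testing relative entropy over product strategies. -/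
noncomputable def DHpro (ε : ℝ) {A B : Type} [Fintype A] [DecidableEq A] [Fintype B]
    [DecidableEq B] (N M : MatC A →ₗ[ℂ] MatC B) (n : ℕ) : EReal :=
  sSup {x : EReal | ∃ (R : Fin n → Type) (fR : ∀ i, Fintype (R i))
    (dR : ∀ i, DecidableEq (R i)) (φ : ∀ i, MatC (R i × A)),
      letI := fR; letI := dR;
      (∀ i, IsDensity (φ i)) ∧
        x = DHe ε (piKron fun i => idTensor (R i) N (φ i))
              (piKron fun i => idTensor (R i) M (φ i))}

/-- The optimal hypothesis-testing relative entropy over sequential strategies for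
`m + 1` channel uses. -/
noncomputable def DHseq (ε : ℝ) {A B : Type} [Fintype A] [DecidableEq A] [Fintype B]
    [DecidableEq B] (N M : MatC A →ₗ[ℂ] MatC B) (m : ℕ) : EReal :=
  sSup {x : EReal | ∃ S : SeqStrategy A B m,
    x = DHe ε (S.finalState N) (S.finalState M)}

/-- The strong converse exponent of channel discrimination under product strategies. -/
noncomputable def scExpPRO (r : ℝ) {A B : Type} [Fintype A] [DecidableEq A] [Fintype B]
    [DecidableEq B] (N M : MatC A →ₗ[ℂ] MatC B) : EReal :=
  sInf {e : EReal | ∃ S : (n : ℕ) → ProdStrategy A B n,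
    (Filter.limsup (fun n : ℕ => (((n : ℝ)⁻¹ : ℝ) : EReal) * elog2 ((S n).typeII M))
        Filter.atTop ≤ ((-r : ℝ) : EReal)) ∧
    e = -Filter.liminf (fun n : ℕ => (((n : ℝ)⁻¹ : ℝ) : EReal) * elog2 (1 - (S n).typeI N))
        Filter.atTop}

/-- The error exponent of channel discrimination under product strategies. -/
noncomputable def erExpPRO (r : ℝ) {A B : Type} [Fintype A] [DecidableEq A] [Fintype B]
    [DecidableEq B] (N M : MatC A →ₗ[ℂ] MatC B) : EReal :=
  sSup {e : EReal | ∃ S : (n : ℕ) → ProdStrategy A B n,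
    (Filter.limsup (fun n : ℕ => (((n : ℝ)⁻¹ : ℝ) : EReal) * elog2 ((S n).typeII M))
        Filter.atTop ≤ ((-r : ℝ) : EReal)) ∧
    e = -Filter.limsup (fun n : ℕ => (((n : ℝ)⁻¹ : ℝ) : EReal) * elog2 ((S n).typeI N))
        Filter.atTop}

/-- The error exponent of channel discrimination under coherent strategies. -/
noncomputable def erExpCOH (r : ℝ) {A B : Type} [Fintype A] [DecidableEq A] [Fintype B]
    [DecidableEq B] (N M : MatC A →ₗ[ℂ] MatC B) : EReal :=
  sSup {e : EReal | ∃ S : (n : ℕ) → CohStrategy A B n,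
    (Filter.limsup (fun n : ℕ => (((n : ℝ)⁻¹ : ℝ) : EReal) * elog2 ((S n).typeII M))
        Filter.atTop ≤ ((-r : ℝ) : EReal)) ∧
    e = -Filter.limsup (fun n : ℕ => (((n : ℝ)⁻¹ : ℝ) : EReal) * elog2 ((S n).typeI N))
        Filter.atTop}

/-! ### Auxiliary lemmas for stmt4 -/

namespace Stmt4Aux
open Matrix
set_option linter.unusedSectionVars false

variable {A B : Type} [Fintype A] [DecidableEq A] [Fintype B] [DecidableEq B]

/-- Kernel of a matrix map on standard basis matrices. -/
def kern (N : MatC A →ₗ[ℂ] MatC B) (a a' : A) (b b' : B) : ℂ :=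
  N (Matrix.single a a' 1) b b'

lemma map_entry (N : MatC A →ₗ[ℂ] MatC B) (Y : MatC A) (b b' : B) :
    N Y b b' = ∑ a : A, ∑ a' : A, Y a a' * kern N a a' b b' := by
  conv_lhs => rw [Matrix.matrix_eq_sum_single Y]
  rw [map_sum, Matrix.sum_apply]
  refine Finset.sum_congr rfl fun a _ => ?_
  rw [map_sum, Matrix.sum_apply]
  refine Finset.sum_congr rfl fun a' _ => ?_
  have h : Matrix.single a a' (Y a a') = Y a a' • Matrix.single a a' 1 := by
    rw [Matrix.smul_single, smul_eq_mul, mul_one]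
  rw [h, _root_.map_smul]
  rfl

lemma idTensor_entry {R0 : Type} (N : MatC A →ₗ[ℂ] MatC B) (X : MatC (R0 × A))
    (p : R0 × B) (q : R0 × B) :
    idTensor R0 N X p q = N (Matrix.of fun a a' => X (p.1, a) (q.1, a')) p.2 q.2 := rfl

lemma hsp {C : Type} (g : Fin (n+1) → C) :
    (Fin.insertNthEquiv (fun _ => C) 0).symm g = (g 0, Fin.tail g) :=
  Prod.ext rfl (Fin.removeNth_zero g)

lemma powChan_std (N : MatC A →ₗ[ℂ] MatC B) :
    ∀ (n : ℕ) (a a' : Fin n → A) (b b' : Fin n → B),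
      powChan N n (Matrix.single a a' 1) b b' = ∏ i, kern N (a i) (a' i) (b i) (b' i)
  | 0, a, a', b, b' => by
      simp only [powChan, reindexChan, LinearMap.coe_comp, Function.comp_apply,
        LinearEquiv.coe_coe, Matrix.reindexLinearEquiv_apply, Matrix.reindex_apply,
        Matrix.submatrix_apply, LinearMap.id_apply]
      rw [Finset.univ_eq_empty, Finset.prod_empty]
      have h : ∀ (x y : Fin 0 → A), Matrix.single a a' (1:ℂ) x y = 1 := fun x y => by
        rw [Subsingleton.elim x a, Subsingleton.elim y a']
        simp [Matrix.single]
      rw [h]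
  | n + 1, a, a', b, b' => by
      have key : powChan N (n + 1) (Matrix.single a a' 1) b b' =
          tensorChan N (powChan N n)
            (Matrix.single ((a 0, Fin.tail a) : A × (Fin n → A)) (a' 0, Fin.tail a') 1)
            (b 0, Fin.tail b) (b' 0, Fin.tail b') := by
        have h0 : powChan N (n + 1) (Matrix.single a a' 1) b b' =
            tensorChan N (powChan N n)
              (Matrix.reindex ((Fin.insertNthEquiv (fun _ => A) 0).symm) ((Fin.insertNthEquiv (fun _ => A) 0).symm)
                (Matrix.single a a' 1)) ((Fin.insertNthEquiv (fun _ => B) 0).symm b) ((Fin.insertNthEquiv (fun _ => B) 0).symm b') := by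
          simp only [powChan, reindexChan, LinearMap.coe_comp, Function.comp_apply,
            LinearEquiv.coe_coe, Matrix.reindexLinearEquiv_apply, Equiv.symm_symm]
          rfl
        have hstd : Matrix.reindex ((Fin.insertNthEquiv (fun _ => A) 0).symm) ((Fin.insertNthEquiv (fun _ => A) 0).symm)
            (Matrix.single a a' (1:ℂ)) =
            Matrix.single ((a 0, Fin.tail a) : A × (Fin n → A)) (a' 0, Fin.tail a') 1 := by
          ext p q
          simp only [Matrix.reindex_apply, Matrix.submatrix_apply, Matrix.single,
            Matrix.of_apply]
          congr 1
          rw [eq_iff_iff, Equiv.eq_symm_apply, Equiv.eq_symm_apply, hsp, hsp]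
        exact h0.trans (congrFun (congrFun (congrArg (⇑(tensorChan N (powChan N n))) hstd) _) _)
      rw [key]
      have hin : ∀ x x' : A,
          (idTensor A (powChan N n))
            (Matrix.single ((a 0, Fin.tail a) : A × (Fin n → A)) (a' 0, Fin.tail a') 1)
            (x, Fin.tail b) (x', Fin.tail b') =
          (if a 0 = x ∧ a' 0 = x' then (1:ℂ) else 0) *
            ∏ i : Fin n, kern N (a i.succ) (a' i.succ) (b i.succ) (b' i.succ) := by
        intro x x'
        show powChan N n _ _ _ = _
        have h1 : (Matrix.of fun w w' =>
              Matrix.single ((a 0, Fin.tail a) : A × (Fin n → A)) (a' 0, Fin.tail a') (1:ℂ)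
                ((x, Fin.tail b).1, w) ((x', Fin.tail b').1, w'))
            = (if a 0 = x ∧ a' 0 = x' then (1:ℂ) else 0) •
                Matrix.single (Fin.tail a) (Fin.tail a') 1 := by
          ext w w'
          simp only [Matrix.of_apply, Matrix.single, Matrix.smul_apply, smul_eq_mul,
            Prod.mk.injEq]
          split_ifs <;> simp_all <;> tauto
        rw [h1, _root_.map_smul]
        simp only [Matrix.smul_apply, smul_eq_mul]
        rw [powChan_std N n]
        rfl
      show N (Matrix.of fun x x' => (idTensor A (powChan N n))
            (Matrix.single ((a 0, Fin.tail a) : A × (Fin n → A)) (a' 0, Fin.tail a') 1)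
            (x, Fin.tail b) (x', Fin.tail b'))
          (b 0) (b' 0) = _
      have hout : (Matrix.of fun x x' => (idTensor A (powChan N n))
            (Matrix.single ((a 0, Fin.tail a) : A × (Fin n → A)) (a' 0, Fin.tail a') 1)
            (x, Fin.tail b) (x', Fin.tail b'))
          = (∏ i : Fin n, kern N (a i.succ) (a' i.succ) (b i.succ) (b' i.succ)) •
              Matrix.single (a 0) (a' 0) 1 := by
        ext x x'
        rw [Matrix.of_apply, hin x x']
        simp only [Matrix.smul_apply, smul_eq_mul, Matrix.single, Matrix.of_apply]
        exact mul_comm _ _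
      rw [hout, _root_.map_smul]
      simp only [Matrix.smul_apply, smul_eq_mul]
      rw [Fin.prod_univ_succ, mul_comm]
      rfl

lemma powChan_entry (N : MatC A →ₗ[ℂ] MatC B) (n : ℕ) (X : MatC (Fin n → A))
    (b b' : Fin n → B) :
    powChan N n X b b' =
      ∑ a : Fin n → A, ∑ a' : Fin n → A, X a a' * ∏ i, kern N (a i) (a' i) (b i) (b' i) := by
  rw [map_entry]
  refine Finset.sum_congr rfl fun a _ => Finset.sum_congr rfl fun a' _ => ?_
  rw [kern, powChan_std]

lemma idTensor_powChan_entry {R0 : Type} [Fintype R0] [DecidableEq R0]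
    (N : MatC A →ₗ[ℂ] MatC B) (n : ℕ) (ψ : MatC (R0 × (Fin n → A)))
    (r r' : R0) (b b' : Fin n → B) :
    idTensor R0 (powChan N n) ψ (r, b) (r', b') =
      ∑ a : Fin n → A, ∑ a' : Fin n → A,
        ψ (r, a) (r', a') * ∏ i, kern N (a i) (a' i) (b i) (b' i) := by
  rw [idTensor_entry, powChan_entry]
  rfl


lemma idTensor_powChan_entry' {R0 : Type} [Fintype R0] [DecidableEq R0]
    (N : MatC A →ₗ[ℂ] MatC B) (n : ℕ) (ψ : MatC (R0 × (Fin n → A)))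
    (q p : R0 × (Fin n → B)) :
    idTensor R0 (powChan N n) ψ q p =
      ∑ a : Fin n → A, ∑ a' : Fin n → A,
        ψ (q.1, a) (p.1, a') * ∏ i, kern N (a i) (a' i) (q.2 i) (p.2 i) := by
  rw [idTensor_entry, powChan_entry]
  rfl

lemma pairPow_entry {R0 : Type} [Fintype R0] [DecidableEq R0]
    (N : MatC A →ₗ[ℂ] MatC B) (n : ℕ) (X : MatC (Fin n → R0 × A))
    (f g : Fin n → R0 × B) :
    pairPow R0 N n X f g =
      ∑ a : Fin n → A, ∑ a' : Fin n → A,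
        X (fun i => ((f i).1, a i)) (fun i => ((g i).1, a' i)) *
          ∏ i, kern N (a i) (a' i) ((f i).2) ((g i).2) := by
  show (Matrix.reindexLinearEquiv ℂ ℂ _ _) ((idTensor (Fin n → R0) (powChan N n))
      ((Matrix.reindexLinearEquiv ℂ ℂ _ _) X)) f g = _
  rw [Matrix.reindexLinearEquiv_apply, Matrix.reindex_apply, Matrix.submatrix_apply]
  rw [show ((Equiv.arrowProdEquivProdArrow (Fin n) (fun _ => R0) (fun _ => B)).symm.symm f)
      = (fun i => (f i).1, fun i => (f i).2) from rfl]
  rw [show ((Equiv.arrowProdEquivProdArrow (Fin n) (fun _ => R0) (fun _ => B)).symm.symm g)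
      = (fun i => (g i).1, fun i => (g i).2) from rfl]
  rw [idTensor_powChan_entry]
  refine Finset.sum_congr rfl fun a _ => Finset.sum_congr rfl fun a' _ => ?_
  congr 1

/-! ### Trace preservation -/

lemma trace_reindexLE {ι κ : Type} [Fintype ι] [Fintype κ] (e : ι ≃ κ) (X : MatC ι) :
    ((Matrix.reindexLinearEquiv ℂ ℂ e e) X).trace = X.trace := by
  simp only [Matrix.reindexLinearEquiv_apply, Matrix.reindex_apply, Matrix.trace,
    Matrix.diag, Matrix.submatrix_apply]
  exact Equiv.sum_comp e.symm (fun j => X j j)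

lemma trace_idTensor {R0 : Type} [Fintype R0] (N : MatC A →ₗ[ℂ] MatC B)
    (hN : ∀ X : MatC A, (N X).trace = X.trace) (X : MatC (R0 × A)) :
    (idTensor R0 N X).trace = X.trace := by
  simp only [Matrix.trace, Matrix.diag]
  rw [Fintype.sum_prod_type]
  conv_rhs => rw [Fintype.sum_prod_type]
  refine Finset.sum_congr rfl fun r _ => ?_
  have := hN (Matrix.of fun a a' => X (r,a) (r,a'))
  simp only [Matrix.trace, Matrix.diag, Matrix.of_apply] at this
  exact this

lemma trace_tensorId {D : Type} [Fintype D] (N : MatC A →ₗ[ℂ] MatC B)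
    (hN : ∀ X : MatC A, (N X).trace = X.trace) (X : MatC (A × D)) :
    (tensorId D N X).trace = X.trace := by
  simp only [Matrix.trace, Matrix.diag]
  rw [Fintype.sum_prod_type_right]
  conv_rhs => rw [Fintype.sum_prod_type_right]
  refine Finset.sum_congr rfl fun d _ => ?_
  have := hN (Matrix.of fun a a' => X (a,d) (a',d))
  simp only [Matrix.trace, Matrix.diag, Matrix.of_apply] at this
  exact this

lemma trace_powChan (N : MatC A →ₗ[ℂ] MatC B)
    (hN : ∀ X : MatC A, (N X).trace = X.trace) :
    ∀ (n : ℕ) (X : MatC (Fin n → A)), (powChan N n X).trace = X.trace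
  | 0, X => by
      show ((Matrix.reindexLinearEquiv ℂ ℂ _ _) ((Matrix.reindexLinearEquiv ℂ ℂ _ _) X)).trace = _
      rw [trace_reindexLE, trace_reindexLE]
  | n + 1, X => by
      show ((Matrix.reindexLinearEquiv ℂ ℂ _ _) ((tensorChan N (powChan N n))
        ((Matrix.reindexLinearEquiv ℂ ℂ _ _) X))).trace = _
      rw [trace_reindexLE]
      show ((tensorId (Fin n → B) N) ((idTensor A (powChan N n)) _)).trace = _
      rw [trace_tensorId N hN, trace_idTensor (powChan N n) (trace_powChan N hN n),
        trace_reindexLE]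

/-! ### Purification -/

lemma exists_purif {ι : Type} [Fintype ι] [DecidableEq ι] {ρ : MatC ι} (hρ : ρ.PosSemidef) :
    ∃ w : ι → ι → ℂ, ∀ s s', ρ s s' = ∑ e, w s e * star (w s' e) := by
  open scoped MatrixOrder Matrix.Norms.L2Operator in
  obtain ⟨Bm, hB⟩ := CStarAlgebra.nonneg_iff_eq_star_mul_self.mp hρ.nonneg
  refine ⟨fun s e => star (Bm e s), fun s s' => ?_⟩
  rw [hB]
  simp [Matrix.mul_apply, Matrix.conjTranspose_apply, Matrix.star_eq_conjTranspose]

/-! ### The symmetrizing embedding -/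

variable {R : Type} [Fintype R] [DecidableEq R] {n : ℕ}

abbrev RRef (R A : Type) (n : ℕ) : Type := R × ((R × A) × Fin n)

def Emb {C : Type} (σ : Equiv.Perm (Fin n)) (e : Fin n → R × A)
    (p : (Fin n → R) × (Fin n → C)) : Fin n → RRef R A n × C :=
  fun i => ((p.1 (σ i), (e (σ i), σ i)), p.2 (σ i))

def cOf {C : Type} (f : Fin n → RRef R A n × C) : Fin n → Fin n := fun i => (f i).1.2.2

def eOf {C : Type} (f : Fin n → RRef R A n × C) : Fin n → R × A := fun i => (f i).1.2.1

lemma cOf_Emb {C : Type} (σ : Equiv.Perm (Fin n)) (e : Fin n → R × A)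
    (p : (Fin n → R) × (Fin n → C)) : cOf (Emb σ e p) = ⇑σ := rfl

lemma eOf_Emb {C : Type} (σ : Equiv.Perm (Fin n)) (e : Fin n → R × A)
    (p : (Fin n → R) × (Fin n → C)) : eOf (Emb σ e p) = fun i => e (σ i) := rfl

lemma bij_cOf_Emb {C : Type} (σ : Equiv.Perm (Fin n)) (e : Fin n → R × A)
    (p : (Fin n → R) × (Fin n → C)) : Function.Bijective (cOf (Emb σ e p)) := σ.bijective

lemma ofBij_symm_eq {α β : Type} {g : α → β} (h : Function.Bijective g) {x : α} {j : β}
    (hx : g x = j) : (Equiv.ofBijective g h).symm j = x :=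
  h.injective (by rw [Equiv.ofBijective_apply_symm_apply g h j]; exact hx.symm)

def dec {C : Type} (f : Fin n → RRef R A n × C) : (Fin n → R) × (Fin n → C) :=
  if h : Function.Bijective (cOf f) then
    (fun j => (f ((Equiv.ofBijective _ h).symm j)).1.1,
     fun j => (f ((Equiv.ofBijective _ h).symm j)).2)
  else (fun j => (f j).1.1, fun j => (f j).2)

def decE {C : Type} (f : Fin n → RRef R A n × C) : (Fin n → R) × (Fin n → A) :=
  if h : Function.Bijective (cOf f) then
    (fun j => (eOf f ((Equiv.ofBijective _ h).symm j)).1,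
     fun j => (eOf f ((Equiv.ofBijective _ h).symm j)).2)
  else (fun j => (eOf f j).1, fun j => (eOf f j).2)

lemma dec_Emb {C : Type} (σ : Equiv.Perm (Fin n)) (e : Fin n → R × A)
    (p : (Fin n → R) × (Fin n → C)) : dec (Emb σ e p) = p := by
  have h : Function.Bijective (cOf (Emb σ e p)) := bij_cOf_Emb σ e p
  rw [dec, dif_pos h]
  have hs : ∀ j, σ ((Equiv.ofBijective _ h).symm j) = j := fun j =>
    Equiv.ofBijective_apply_symm_apply _ h j
  refine Prod.ext ?_ ?_ <;> funext j <;> · show _ = _ ; simp only [Emb] ; rw [hs j]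

lemma decE_Emb {C : Type} (σ : Equiv.Perm (Fin n)) (e : Fin n → R × A)
    (p : (Fin n → R) × (Fin n → C)) :
    decE (Emb σ e p) = (fun j => (e j).1, fun j => (e j).2) := by
  have h : Function.Bijective (cOf (Emb σ e p)) := bij_cOf_Emb σ e p
  rw [decE, dif_pos h]
  have hs : ∀ j, σ ((Equiv.ofBijective _ h).symm j) = j := fun j =>
    Equiv.ofBijective_apply_symm_apply _ h j
  refine Prod.ext ?_ ?_ <;> funext j <;> · show _ = _ ; simp only [eOf_Emb] ; rw [hs j]

lemma Emb_inj {C : Type} : Function.Injective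
    (fun x : Equiv.Perm (Fin n) × (Fin n → R × A) × ((Fin n → R) × (Fin n → C)) =>
      Emb x.1 x.2.1 x.2.2) := by
  rintro ⟨σ, e, p⟩ ⟨σ', e', p'⟩ h
  simp only at h
  have hσ : σ = σ' := Equiv.coe_fn_injective (show ⇑σ = ⇑σ' by rw [← cOf_Emb σ e p, h, cOf_Emb])
  subst hσ
  have hp : p = p' := by rw [← dec_Emb σ e p, h, dec_Emb]
  have he : e = e' := by
    funext j
    have h2 := congrFun (congrArg eOf h) (σ.symm j)
    simpa only [eOf_Emb, Equiv.apply_symm_apply] using h2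
  rw [hp, he]

lemma Emb_surj {C : Type} (f : Fin n → RRef R A n × C) (h : Function.Bijective (cOf f)) :
    Emb (Equiv.ofBijective _ h) (fun j => eOf f ((Equiv.ofBijective _ h).symm j)) (dec f) = f := by
  funext i
  simp only [Emb, dec, dif_pos h, Equiv.symm_apply_apply]
  show (((f i).1.1, ((f i).1.2.1, cOf f i)), (f i).2) = f i
  rfl

lemma sum_emb {C : Type} [Fintype C] [DecidableEq C] {M : Type} [AddCommMonoid M]
    (F : (Fin n → RRef R A n × C) → M)
    (hF : ∀ f, ¬ Function.Bijective (cOf f) → F f = 0) :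
    ∑ f, F f = ∑ x : Equiv.Perm (Fin n) × (Fin n → R × A) × ((Fin n → R) × (Fin n → C)),
      F (Emb x.1 x.2.1 x.2.2) := by
  classical
  rw [← Finset.sum_filter_of_ne (p := fun f => Function.Bijective (cOf f))
      (fun f _ hf => by by_contra hb; exact hf (hF f hb))]
  refine (Finset.sum_bij (fun x _ => Emb x.1 x.2.1 x.2.2) ?_ ?_ ?_ ?_).symm
  · intro x _
    simp only [Finset.mem_filter, Finset.mem_univ, true_and]
    exact bij_cOf_Emb _ _ _
  · intro x _ y _ hxy
    exact Emb_inj hxy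
  · intro f hf
    simp only [Finset.mem_filter, Finset.mem_univ, true_and] at hf
    exact ⟨(Equiv.ofBijective _ hf, fun j => eOf f ((Equiv.ofBijective _ hf).symm j), dec f),
      Finset.mem_univ _, Emb_surj f hf⟩
  · intro x _
    rfl

lemma sum_emb_fix {C : Type} [Fintype C] [DecidableEq C] {M : Type} [AddCommMonoid M]
    (σ : Equiv.Perm (Fin n)) (e : Fin n → R × A)
    (G : (Fin n → RRef R A n × C) → M)
    (hG : ∀ g, ¬ (cOf g = ⇑σ ∧ eOf g = fun i => e (σ i)) → G g = 0) :
    ∑ g, G g = ∑ q : (Fin n → R) × (Fin n → C), G (Emb σ e q) := by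
  classical
  rw [← Finset.sum_filter_of_ne (p := fun g => cOf g = ⇑σ ∧ eOf g = fun i => e (σ i))
      (fun g _ hg => by by_contra hb; exact hg (hG g hb))]
  refine (Finset.sum_bij (fun q _ => Emb σ e q) ?_ ?_ ?_ ?_).symm
  · intro q _
    exact Finset.mem_filter.mpr ⟨Finset.mem_univ _, cOf_Emb _ _ _, eOf_Emb _ _ _⟩
  · intro q _ q' _ hqq
    rw [← dec_Emb σ e q, hqq, dec_Emb]
  · intro g hg
    simp only [Finset.mem_filter, Finset.mem_univ, true_and] at hg
    have hb : Function.Bijective (cOf g) := hg.1 ▸ σ.bijective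
    refine ⟨dec g, Finset.mem_univ _, ?_⟩
    funext i
    have hsymm : ∀ i, (Equiv.ofBijective _ hb).symm (σ i) = i := fun i =>
      ofBij_symm_eq hb (by rw [hg.1])
    simp only [Emb, dec, dif_pos hb, hsymm]
    have he : e (σ i) = eOf g i := by rw [← congrFun hg.2 i]
    have hc : (σ : Fin n → Fin n) i = cOf g i := by rw [hg.1]
    rw [he, hc]
    rfl
  · intro q _
    rfl

/-! ### The symmetric vector -/

def uVec (w : ((Fin n → R) × (Fin n → A)) → ((Fin n → R) × (Fin n → A)) → ℂ)
    (f : Fin n → RRef R A n × A) : ℂ :=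
  if Function.Bijective (cOf f) then
    (((Real.sqrt n.factorial)⁻¹ : ℝ) : ℂ) * w (dec f) (decE f)
  else 0

lemma uVec_Emb (w : ((Fin n → R) × (Fin n → A)) → ((Fin n → R) × (Fin n → A)) → ℂ)
    (σ : Equiv.Perm (Fin n)) (e : Fin n → R × A) (p : (Fin n → R) × (Fin n → A)) :
    uVec w (Emb σ e p) =
      (((Real.sqrt n.factorial)⁻¹ : ℝ) : ℂ) * w p (fun j => (e j).1, fun j => (e j).2) := by
  rw [uVec, if_pos (bij_cOf_Emb σ e p), dec_Emb, decE_Emb]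

lemma uVec_zero (w : ((Fin n → R) × (Fin n → A)) → ((Fin n → R) × (Fin n → A)) → ℂ)
    (f : Fin n → RRef R A n × A) (h : ¬ Function.Bijective (cOf f)) : uVec w f = 0 :=
  if_neg h

lemma uVec_perm (w : ((Fin n → R) × (Fin n → A)) → ((Fin n → R) × (Fin n → A)) → ℂ)
    (π : Equiv.Perm (Fin n)) (f : Fin n → RRef R A n × A) :
    uVec w (f ∘ ⇑π) = uVec w f := by
  by_cases h : Function.Bijective (cOf f)
  · rw [← Emb_surj f h]
    have hco : (Emb (Equiv.ofBijective _ h)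
          (fun j => eOf f ((Equiv.ofBijective _ h).symm j)) (dec f)) ∘ ⇑π
        = Emb (π.trans (Equiv.ofBijective _ h))
          (fun j => eOf f ((Equiv.ofBijective _ h).symm j)) (dec f) := rfl
    rw [hco, uVec_Emb, uVec_Emb]
  · have h2 : ¬ Function.Bijective (cOf (f ∘ ⇑π)) := by
      intro hb
      exact h ((Function.Bijective.of_comp_iff (cOf f) π.bijective).mp hb)
    rw [uVec_zero w _ h2, uVec_zero w f h]

/-! ### The lifted test -/

variable [Fintype B] [DecidableEq B] in
def liftT (T : MatC ((Fin n → R) × (Fin n → B))) : MatC (Fin n → RRef R A n × B) :=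
  Matrix.of fun f g =>
    if Function.Bijective (cOf f) ∧ cOf g = cOf f ∧ eOf g = eOf f then T (dec f) (dec g) else 0

section LiftT
variable {T : MatC ((Fin n → R) × (Fin n → B))}

lemma liftT_Emb (T : MatC ((Fin n → R) × (Fin n → B))) (σ : Equiv.Perm (Fin n))
    (e : Fin n → R × A) (p q : (Fin n → R) × (Fin n → B)) :
    liftT (A := A) T (Emb σ e p) (Emb σ e q) = T p q := by
  have hcond : Function.Bijective (cOf (Emb (A := A) (C := B) σ e p)) ∧
      cOf (Emb (A := A) (C := B) σ e q) = cOf (Emb (A := A) (C := B) σ e p) ∧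
      eOf (Emb (A := A) (C := B) σ e q) = eOf (Emb (A := A) (C := B) σ e p) :=
    ⟨bij_cOf_Emb σ e p, rfl, rfl⟩
  show (if Function.Bijective (cOf (Emb (A := A) (C := B) σ e p)) ∧
      cOf (Emb (A := A) (C := B) σ e q) = cOf (Emb (A := A) (C := B) σ e p) ∧
      eOf (Emb (A := A) (C := B) σ e q) = eOf (Emb (A := A) (C := B) σ e p)
    then T (dec (Emb σ e p)) (dec (Emb σ e q)) else 0) = T p q
  rw [if_pos hcond, dec_Emb, dec_Emb]

lemma liftT_zero₁ (T : MatC ((Fin n → R) × (Fin n → B))) (f g : Fin n → RRef R A n × B)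
    (h : ¬ Function.Bijective (cOf f)) : liftT (A := A) T f g = 0 := by
  show (if Function.Bijective (cOf f) ∧ cOf g = cOf f ∧ eOf g = eOf f
    then T (dec f) (dec g) else 0) = 0
  exact if_neg (fun hc => h hc.1)

lemma liftT_zero₂ (T : MatC ((Fin n → R) × (Fin n → B))) (σ : Equiv.Perm (Fin n))
    (e : Fin n → R × A) (p : (Fin n → R) × (Fin n → B)) (g : Fin n → RRef R A n × B)
    (h : ¬ (cOf g = ⇑σ ∧ eOf g = fun i => e (σ i))) : liftT (A := A) T (Emb σ e p) g = 0 := by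
  show (if Function.Bijective (cOf (Emb (A := A) (C := B) σ e p)) ∧
      cOf g = cOf (Emb (A := A) (C := B) σ e p) ∧
      eOf g = eOf (Emb (A := A) (C := B) σ e p)
    then T (dec (Emb σ e p)) (dec g) else 0) = 0
  refine if_neg (fun hc => h ⟨?_, ?_⟩)
  · rw [hc.2.1, cOf_Emb]
  · rw [hc.2.2, eOf_Emb]

lemma liftT_herm (hT : T.IsHermitian) : (liftT (A := A) T).IsHermitian := by
  refine Matrix.IsHermitian.ext fun f g => ?_
  show star (liftT (A := A) T g f) = liftT (A := A) T f g
  show star (if Function.Bijective (cOf g) ∧ cOf f = cOf g ∧ eOf f = eOf g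
      then T (dec g) (dec f) else 0)
    = (if Function.Bijective (cOf f) ∧ cOf g = cOf f ∧ eOf g = eOf f
      then T (dec f) (dec g) else 0)
  by_cases hc : Function.Bijective (cOf f) ∧ cOf g = cOf f ∧ eOf g = eOf f
  · have hc' : Function.Bijective (cOf g) ∧ cOf f = cOf g ∧ eOf f = eOf g :=
      ⟨by rw [hc.2.1]; exact hc.1, hc.2.1.symm, hc.2.2.symm⟩
    rw [if_pos hc, if_pos hc']
    exact hT.apply _ _
  · have hc' : ¬ (Function.Bijective (cOf g) ∧ cOf f = cOf g ∧ eOf f = eOf g) := by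
      intro h
      exact hc ⟨by rw [h.2.1]; exact h.1, h.2.1.symm, h.2.2.symm⟩
    rw [if_neg hc, if_neg hc', star_zero]

lemma liftT_form (T : MatC ((Fin n → R) × (Fin n → B))) (x : (Fin n → RRef R A n × B) → ℂ) :
    dotProduct (star x) ((liftT (A := A) T) *ᵥ x) =
      ∑ σ : Equiv.Perm (Fin n), ∑ e : Fin n → R × A,
        dotProduct (star fun p => x (Emb σ e p)) (T *ᵥ (fun p => x (Emb σ e p))) := by
  have h1 : dotProduct (star x) ((liftT (A := A) T) *ᵥ x)
      = ∑ f, star (x f) * ∑ g, liftT (A := A) T f g * x g := by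
    simp only [dotProduct, Matrix.mulVec, Pi.star_apply]
  rw [h1, sum_emb (fun f => star (x f) * ∑ g, liftT (A := A) T f g * x g)
    (fun f hf => by
      show star (x f) * ∑ g, liftT (A := A) T f g * x g = 0
      rw [Finset.sum_congr rfl fun g _ => by rw [liftT_zero₁ T f g hf, zero_mul]]
      simp)]
  rw [Fintype.sum_prod_type]
  refine Finset.sum_congr rfl fun σ _ => ?_
  rw [Fintype.sum_prod_type]
  refine Finset.sum_congr rfl fun e _ => ?_
  simp only [dotProduct, Matrix.mulVec, Pi.star_apply]
  refine Finset.sum_congr rfl fun p _ => ?_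
  congr 1
  rw [sum_emb_fix σ e (fun g => liftT (A := A) T (Emb σ e p) g * x g)
    (fun g hg => by
      show liftT (A := A) T (Emb σ e p) g * x g = 0
      rw [liftT_zero₂ T σ e p g hg, zero_mul])]
  refine Finset.sum_congr rfl fun q _ => ?_
  rw [liftT_Emb]

lemma sum_sq_split {C : Type} [Fintype C] [DecidableEq C] (x : (Fin n → RRef R A n × C) → ℂ) :
    dotProduct (star x) x =
      (∑ σ : Equiv.Perm (Fin n), ∑ e : Fin n → R × A,
        dotProduct (star fun p => x (Emb σ e p)) (fun p => x (Emb σ e p)))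
      + ∑ f, (if Function.Bijective (cOf f) then 0 else star (x f) * x f) := by
  have h1 : dotProduct (star x) x = ∑ f, star (x f) * x f := by
    simp only [dotProduct, Pi.star_apply]
  rw [h1]
  have h2 : ∀ f : Fin n → RRef R A n × C, star (x f) * x f =
      (if Function.Bijective (cOf f) then star (x f) * x f else 0)
      + (if Function.Bijective (cOf f) then 0 else star (x f) * x f) := by
    intro f
    by_cases h : Function.Bijective (cOf f)
    · rw [if_pos h, if_pos h, add_zero]
    · rw [if_neg h, if_neg h, zero_add]
  rw [Finset.sum_congr rfl fun f _ => h2 f, Finset.sum_add_distrib]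
  congr 1
  rw [sum_emb (fun f => if Function.Bijective (cOf f) then star (x f) * x f else 0)
    (fun f hf => by
      show (if Function.Bijective (cOf f) then star (x f) * x f else 0) = 0
      rw [if_neg hf])]
  rw [Fintype.sum_prod_type]
  refine Finset.sum_congr rfl fun σ _ => ?_
  rw [Fintype.sum_prod_type]
  refine Finset.sum_congr rfl fun e _ => ?_
  simp only [dotProduct, Pi.star_apply]
  refine Finset.sum_congr rfl fun p _ => ?_
  rw [if_pos (bij_cOf_Emb σ e p)]

lemma liftT_psd (hT : T.PosSemidef) : (liftT (A := A) T).PosSemidef := by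
  refine Matrix.PosSemidef.of_dotProduct_mulVec_nonneg (liftT_herm hT.1) fun x => ?_
  rw [liftT_form]
  refine Finset.sum_nonneg fun σ _ => Finset.sum_nonneg fun e _ => hT.dotProduct_mulVec_nonneg _

lemma liftT_one_sub_psd (hT : T.IsHermitian) (hT2 : (1 - T).PosSemidef) :
    (1 - liftT (A := A) T).PosSemidef := by
  refine Matrix.PosSemidef.of_dotProduct_mulVec_nonneg
    (Matrix.IsHermitian.sub Matrix.isHermitian_one (liftT_herm hT)) fun x => ?_
  rw [Matrix.sub_mulVec, Matrix.one_mulVec, dotProduct_sub, liftT_form, sum_sq_split]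
  have key : ∀ (σ : Equiv.Perm (Fin n)) (e : Fin n → R × A),
      dotProduct (star fun p => x (Emb σ e p)) (fun p => x (Emb σ e p))
        - dotProduct (star fun p => x (Emb σ e p)) (T *ᵥ (fun p => x (Emb σ e p)))
      = dotProduct (star fun p => x (Emb σ e p)) ((1 - T) *ᵥ (fun p => x (Emb σ e p))) := by
    intro σ e
    rw [Matrix.sub_mulVec, Matrix.one_mulVec, dotProduct_sub]
  rw [add_sub_right_comm, ← Finset.sum_sub_distrib]
  rw [Finset.sum_congr rfl fun σ _ => (Finset.sum_sub_distrib _ _).symm]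
  rw [Finset.sum_congr rfl fun σ _ => Finset.sum_congr rfl fun e _ => key σ e]
  refine add_nonneg (Finset.sum_nonneg fun σ _ => Finset.sum_nonneg fun e _ => hT2.dotProduct_mulVec_nonneg _) ?_
  refine Finset.sum_nonneg fun f _ => ?_
  by_cases h : Function.Bijective (cOf f)
  · rw [if_pos h]
  · rw [if_neg h]
    exact star_mul_self_nonneg (x f)

end LiftT

/-! ### The trace identity -/

def cC (n : ℕ) : ℂ := (((Real.sqrt n.factorial)⁻¹ : ℝ) : ℂ)

lemma star_cC (n : ℕ) : star (cC n) = cC n := by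
  rw [cC, Complex.star_def, Complex.conj_ofReal]

lemma cC_sq (n : ℕ) : cC n * cC n = ((n.factorial : ℂ))⁻¹ := by
  rw [cC, ← Complex.ofReal_mul, ← mul_inv, Real.mul_self_sqrt (by positivity)]
  push_cast
  norm_num

lemma trace_mul_entries {ι : Type} [Fintype ι] (M₁ M₂ : MatC ι) :
    (M₁ * M₂).trace = ∑ f, ∑ g, M₁ f g * M₂ g f := by
  simp [Matrix.trace, Matrix.diag, Matrix.mul_apply]

lemma sum_perm_reindex {C : Type} [Fintype C] (σ : Equiv.Perm (Fin n)) (F : (Fin n → C) → ℂ) :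
    ∑ a : Fin n → C, F a = ∑ α : Fin n → C, F (fun i => α (σ i)) := by
  rw [← Equiv.sum_comp (Equiv.piCongrLeft' (fun _ : Fin n => C) σ.symm) F]
  refine Finset.sum_congr rfl fun α _ => ?_
  congr 1

lemma esplit_eq (e : Fin n → R × A) :
    (Equiv.arrowProdEquivProdArrow (Fin n) (fun _ => R) (fun _ => A)) e
      = ((fun j => (e j).1, fun j => (e j).2) : (Fin n → R) × (Fin n → A)) := rfl

lemma uVec_Emb' (w : ((Fin n → R) × (Fin n → A)) → ((Fin n → R) × (Fin n → A)) → ℂ)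
    (σ : Equiv.Perm (Fin n)) (e : Fin n → R × A) (p : (Fin n → R) × (Fin n → A)) :
    uVec w (Emb σ e p) = cC n * w p (fun j => (e j).1, fun j => (e j).2) := uVec_Emb w σ e p

lemma pairPow_uVec_entry (N : MatC A →ₗ[ℂ] MatC B)
    (w : ((Fin n → R) × (Fin n → A)) → ((Fin n → R) × (Fin n → A)) → ℂ)
    (σ : Equiv.Perm (Fin n)) (e : Fin n → R × A) (q p : (Fin n → R) × (Fin n → B)) :
    pairPow (RRef R A n) N n (Matrix.of fun f g => uVec w f * star (uVec w g))
        (Emb σ e q) (Emb σ e p)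
      = ∑ α : Fin n → A, ∑ α' : Fin n → A,
          (cC n * w (q.1, α) (fun j => (e j).1, fun j => (e j).2)) *
            star (cC n * w (p.1, α') (fun j => (e j).1, fun j => (e j).2)) *
            ∏ j, kern N (α j) (α' j) (q.2 j) (p.2 j) := by
  rw [pairPow_entry]
  rw [sum_perm_reindex σ]
  refine Finset.sum_congr rfl fun α _ => ?_
  rw [sum_perm_reindex σ]
  refine Finset.sum_congr rfl fun α' _ => ?_
  have h1 : (fun i => ((Emb (A := A) (C := B) σ e q i).1, (fun i' => α (σ i')) i))
      = Emb σ e ((q.1, α) : (Fin n → R) × (Fin n → A)) := rfl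
  have h2 : (fun i => ((Emb (A := A) (C := B) σ e p i).1, (fun i' => α' (σ i')) i))
      = Emb σ e ((p.1, α') : (Fin n → R) × (Fin n → A)) := rfl
  rw [h1, h2, Matrix.of_apply, uVec_Emb', uVec_Emb']
  congr 1
  exact Equiv.prod_comp σ (fun j => kern N (α j) (α' j) (q.2 j) (p.2 j))

lemma inner_e_sum (N : MatC A →ₗ[ℂ] MatC B)
    (w : ((Fin n → R) × (Fin n → A)) → ((Fin n → R) × (Fin n → A)) → ℂ)
    (ψ : MatC ((Fin n → R) × (Fin n → A)))
    (hpur : ∀ s s', ψ s s' = ∑ e : (Fin n → R) × (Fin n → A), w s e * star (w s' e))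
    (q p : (Fin n → R) × (Fin n → B)) :
    ∑ e : Fin n → R × A, ∑ α : Fin n → A, ∑ α' : Fin n → A,
        (cC n * w (q.1, α) (fun j => (e j).1, fun j => (e j).2)) *
          star (cC n * w (p.1, α') (fun j => (e j).1, fun j => (e j).2)) *
          ∏ j, kern N (α j) (α' j) (q.2 j) (p.2 j)
      = ((n.factorial : ℂ))⁻¹ * ∑ α : Fin n → A, ∑ α' : Fin n → A,
          ψ (q.1, α) (p.1, α') * ∏ j, kern N (α j) (α' j) (q.2 j) (p.2 j) := by
  rw [Finset.sum_comm]
  rw [Finset.mul_sum]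
  refine Finset.sum_congr rfl fun α _ => ?_
  rw [Finset.sum_comm]
  rw [Finset.mul_sum]
  refine Finset.sum_congr rfl fun α' _ => ?_
  have hterm : ∀ e : Fin n → R × A,
      (cC n * w (q.1, α) (fun j => (e j).1, fun j => (e j).2)) *
        star (cC n * w (p.1, α') (fun j => (e j).1, fun j => (e j).2)) *
        ∏ j, kern N (α j) (α' j) (q.2 j) (p.2 j)
      = (cC n * cC n) *
          ((w (q.1, α) (fun j => (e j).1, fun j => (e j).2) *
            star (w (p.1, α') (fun j => (e j).1, fun j => (e j).2))) *
            ∏ j, kern N (α j) (α' j) (q.2 j) (p.2 j)) := by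
    intro e
    rw [star_mul', star_cC]
    ring
  rw [Finset.sum_congr rfl fun e _ => hterm e, ← Finset.mul_sum]
  rw [← Finset.sum_mul]
  have hre : ∑ e : Fin n → R × A,
      w (q.1, α) (fun j => (e j).1, fun j => (e j).2) *
        star (w (p.1, α') (fun j => (e j).1, fun j => (e j).2))
      = ψ (q.1, α) (p.1, α') := by
    rw [hpur]
    rw [← Equiv.sum_comp (Equiv.arrowProdEquivProdArrow (Fin n) (fun _ => R) (fun _ => A))
      (fun E => w (q.1, α) E * star (w (p.1, α') E))]
    rfl
  rw [hre, cC_sq]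

lemma trace_lift (N : MatC A →ₗ[ℂ] MatC B) (T : MatC ((Fin n → R) × (Fin n → B)))
    (w : ((Fin n → R) × (Fin n → A)) → ((Fin n → R) × (Fin n → A)) → ℂ)
    (ψ : MatC ((Fin n → R) × (Fin n → A)))
    (hpur : ∀ s s', ψ s s' = ∑ e : (Fin n → R) × (Fin n → A), w s e * star (w s' e)) :
    (liftT (A := A) T *
      pairPow (RRef R A n) N n (Matrix.of fun f g => uVec w f * star (uVec w g))).trace
      = (T * idTensor (Fin n → R) (powChan N n) ψ).trace := by
  rw [trace_mul_entries, trace_mul_entries]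
  rw [sum_emb (fun f => ∑ g, liftT (A := A) T f g *
      pairPow (RRef R A n) N n (Matrix.of fun f' g' => uVec w f' * star (uVec w g')) g f)
    (fun f hf => by
      show (∑ g, liftT (A := A) T f g * _) = 0
      rw [Finset.sum_congr rfl fun g _ => by rw [liftT_zero₁ T f g hf, zero_mul]]
      simp)]
  rw [Fintype.sum_prod_type]
  have hstep : ∀ σ : Equiv.Perm (Fin n),
      (∑ y : (Fin n → R × A) × ((Fin n → R) × (Fin n → B)),
        ∑ g, liftT (A := A) T (Emb σ y.1 y.2) g *
          pairPow (RRef R A n) N n (Matrix.of fun f' g' => uVec w f' * star (uVec w g')) g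
            (Emb σ y.1 y.2))
      = ((n.factorial : ℂ))⁻¹ *
          ∑ p : (Fin n → R) × (Fin n → B), ∑ q : (Fin n → R) × (Fin n → B),
            T p q * idTensor (Fin n → R) (powChan N n) ψ q p := by
    intro σ
    rw [Fintype.sum_prod_type]
    -- currently : ∑ e ∑ p ∑ g ; want to push e inside
    rw [Finset.sum_comm]
    rw [Finset.mul_sum]
    refine Finset.sum_congr rfl fun p _ => ?_
    -- goal: ∑ e, ∑ g, liftT T (Emb σ e p) g * Φ' g (Emb σ e p)
    --     = (n!)⁻¹ * ∑ q, T p q * ρ q p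
    have hg : ∀ e : Fin n → R × A,
        (∑ g, liftT (A := A) T (Emb σ e p) g *
          pairPow (RRef R A n) N n (Matrix.of fun f' g' => uVec w f' * star (uVec w g')) g
            (Emb σ e p))
        = ∑ q : (Fin n → R) × (Fin n → B), T p q *
            ∑ α : Fin n → A, ∑ α' : Fin n → A,
              (cC n * w (q.1, α) (fun j => (e j).1, fun j => (e j).2)) *
                star (cC n * w (p.1, α') (fun j => (e j).1, fun j => (e j).2)) *
                ∏ j, kern N (α j) (α' j) (q.2 j) (p.2 j) := by
      intro e
      rw [sum_emb_fix σ e (fun g => liftT (A := A) T (Emb σ e p) g *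
          pairPow (RRef R A n) N n (Matrix.of fun f' g' => uVec w f' * star (uVec w g')) g
            (Emb σ e p))
        (fun g hgg => by
          show liftT (A := A) T (Emb σ e p) g * _ = 0
          rw [liftT_zero₂ T σ e p g hgg, zero_mul])]
      refine Finset.sum_congr rfl fun q _ => ?_
      rw [liftT_Emb, pairPow_uVec_entry]
    rw [Finset.sum_congr rfl fun e _ => hg e]
    rw [Finset.sum_comm, Finset.mul_sum]
    refine Finset.sum_congr rfl fun q _ => ?_
    rw [← Finset.mul_sum, inner_e_sum N w ψ hpur q p]
    rw [idTensor_powChan_entry' N n ψ q p]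
    ring
  rw [Finset.sum_congr rfl fun σ _ => hstep σ]
  rw [Finset.sum_const, Finset.card_univ, Fintype.card_perm, Fintype.card_fin, nsmul_eq_mul,
    ← mul_assoc, mul_inv_cancel₀ (by exact_mod_cast n.factorial_ne_zero), one_mul]

/-! ### Normalization -/

lemma normSq_cC (n : ℕ) : Complex.normSq (cC n) = ((n.factorial : ℝ))⁻¹ := by
  rw [cC, Complex.normSq_ofReal, ← mul_inv, Real.mul_self_sqrt (by positivity)]

lemma uVec_norm (w : ((Fin n → R) × (Fin n → A)) → ((Fin n → R) × (Fin n → A)) → ℂ)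
    (hw : ∑ p : (Fin n → R) × (Fin n → A), ∑ e : (Fin n → R) × (Fin n → A),
      Complex.normSq (w p e) = 1) :
    ∑ f : Fin n → RRef R A n × A, Complex.normSq (uVec w f) = 1 := by
  rw [sum_emb (fun f => Complex.normSq (uVec w f))
    (fun f hf => by
      show Complex.normSq (uVec w f) = 0
      rw [uVec_zero w f hf, map_zero])]
  rw [Fintype.sum_prod_type]
  have hσ : ∀ σ : Equiv.Perm (Fin n),
      (∑ y : (Fin n → R × A) × ((Fin n → R) × (Fin n → A)),
        Complex.normSq (uVec w (Emb σ y.1 y.2))) = ((n.factorial : ℝ))⁻¹ := by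
    intro σ
    rw [Fintype.sum_prod_type]
    have hterm : ∀ (e : Fin n → R × A) (p : (Fin n → R) × (Fin n → A)),
        Complex.normSq (uVec w (Emb σ e p))
        = ((n.factorial : ℝ))⁻¹ *
            Complex.normSq (w p (fun j => (e j).1, fun j => (e j).2)) := by
      intro e p
      rw [uVec_Emb', Complex.normSq_mul, normSq_cC]
    rw [Finset.sum_congr rfl fun e _ => Finset.sum_congr rfl fun p _ => hterm e p]
    rw [Finset.sum_congr rfl fun e _ => (Finset.mul_sum _ _ _).symm, ← Finset.mul_sum]
    have hs : ∑ e : Fin n → R × A, ∑ p : (Fin n → R) × (Fin n → A),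
        Complex.normSq (w p (fun j => (e j).1, fun j => (e j).2)) = 1 := by
      rw [Finset.sum_comm]
      calc ∑ p : (Fin n → R) × (Fin n → A), ∑ x : Fin n → R × A,
            Complex.normSq (w p (fun j => (x j).1, fun j => (x j).2))
          = ∑ p : (Fin n → R) × (Fin n → A), ∑ x : Fin n → R × A,
            Complex.normSq (w p ((Equiv.arrowProdEquivProdArrow (Fin n) (fun _ => R) (fun _ => A)) x)) := rfl
        _ = ∑ p : (Fin n → R) × (Fin n → A), ∑ E : (Fin n → R) × (Fin n → A),
            Complex.normSq (w p E) :=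
            Finset.sum_congr rfl fun p _ => Equiv.sum_comp
              (Equiv.arrowProdEquivProdArrow (Fin n) (fun _ => R) (fun _ => A)) (fun E => Complex.normSq (w p E))
        _ = 1 := hw
    rw [hs, mul_one]
  rw [Finset.sum_congr rfl fun σ _ => hσ σ]
  rw [Finset.sum_const, Finset.card_univ, Fintype.card_perm, Fintype.card_fin, nsmul_eq_mul,
    mul_inv_cancel₀ (by exact_mod_cast n.factorial_ne_zero)]

/-! ### Entry bound for tests -/

lemma star_single_one {ι : Type} [Fintype ι] [DecidableEq ι] (i : ι) :
    star (Pi.single i (1:ℂ) : ι → ℂ) = (Pi.single i (1:ℂ) : ι → ℂ) := by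
  funext k
  by_cases hk : k = i <;> simp [hk, Pi.single_apply]

lemma psd_diag {ι : Type} [Fintype ι] [DecidableEq ι] {T : MatC ι} (hT : T.PosSemidef)
    (i : ι) : 0 ≤ (T i i).re ∧ (T i i).im = 0 := by
  have h := hT.dotProduct_mulVec_nonneg (Pi.single i 1)
  have he : dotProduct (star (Pi.single i 1 : ι → ℂ)) (T *ᵥ Pi.single i 1) = T i i := by
    rw [star_single_one, Matrix.mulVec_single_one, single_dotProduct]
    simp
  rw [he] at h
  obtain ⟨h1, h2⟩ := Complex.le_def.mp h
  exact ⟨by simpa using h1, by simpa using h2.symm⟩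

lemma entry_abs_le_one {ι : Type} [Fintype ι] [DecidableEq ι] {T : MatC ι}
    (h1 : T.PosSemidef) (h2 : (1 - T).PosSemidef) (i j : ι) : ‖T i j‖ ≤ 1 := by
  have hub : ∀ k, (T k k).re ≤ 1 := by
    intro k
    have hd := (psd_diag h2 k).1
    have : ((1 - T : MatC ι) k k).re = 1 - (T k k).re := by
      simp [Matrix.sub_apply, Matrix.one_apply]
    rw [this] at hd
    linarith
  have hdi := psd_diag h1 i
  have hdj := psd_diag h1 j
  by_cases hij : i = j
  · subst hij
    have : T i i = ((T i i).re : ℂ) := Complex.ext rfl (by simp [hdi.2])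
    rw [this, Complex.norm_real, Real.norm_eq_abs, abs_of_nonneg hdi.1]
    exact hub i
  · by_cases hz : T i j = 0
    · rw [hz]
      simp
    · set a : ℝ := ‖T i j‖ with ha
      have hapos : 0 < a := by
        rw [ha]
        exact norm_pos_iff.mpr hz
      set μ : ℂ := -(a : ℂ) / T i j with hμ
      have hμTij : μ * T i j = -(a : ℂ) := div_mul_cancel₀ _ hz
      have hμn : Complex.normSq μ = 1 := by
        rw [hμ, Complex.normSq_div, Complex.normSq_neg, Complex.normSq_ofReal,
          Complex.normSq_eq_norm_sq, ← ha]
        field_simp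
      have hμμ : star μ * μ = 1 := by
        have hn : (Complex.normSq μ : ℂ) = 1 := by rw [hμn, Complex.ofReal_one]
        calc star μ * μ = (Complex.normSq μ : ℂ) := by
              rw [mul_comm]
              exact Complex.mul_conj μ
          _ = 1 := hn
      have hji : T j i = star (T i j) := (h1.1.apply j i).symm
      have hμji : star μ * T j i = -(a : ℂ) := by
        rw [hji, ← star_mul', hμTij, star_neg]
        exact congrArg Neg.neg (Complex.conj_ofReal a)
      set x : ι → ℂ := Pi.single i 1 + μ • (Pi.single j 1 : ι → ℂ) with hx
      have hform := h1.dotProduct_mulVec_nonneg x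
      have hval : dotProduct (star x) (T *ᵥ x)
          = T i i + star μ * μ * T j j + μ * T i j + star μ * T j i := by
        rw [hx]
        simp only [star_add, star_smul, star_single_one, Matrix.mulVec_add, Matrix.mulVec_smul,
          Matrix.mulVec_single_one, Matrix.col_apply, mul_one, add_dotProduct, smul_dotProduct,
          dotProduct_add, dotProduct_smul, single_dotProduct, smul_eq_mul]
        ring
      rw [hval, hμμ, hμTij, hμji, one_mul] at hform
      obtain ⟨hre, _⟩ := Complex.le_def.mp hform
      simp only [Complex.add_re, Complex.neg_re, Complex.ofReal_re, Complex.zero_re] at hre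
      have hbi := hub i
      have hbj := hub j
      linarith

/-! ### Monotonicity of DHe under betaSet inclusion -/

lemma betaSet_bddBelow {ι : Type} [Fintype ι] [DecidableEq ι] (ε : ℝ) (ρ σ : MatC ι) :
    BddBelow (betaSet ε ρ σ) := by
  refine ⟨-(∑ f, ∑ g, ‖σ g f‖), ?_⟩
  rintro x ⟨T, hT1, hT2, _, rfl⟩
  have habs : ‖(T * σ).trace‖ ≤ ∑ f, ∑ g, ‖σ g f‖ := by
    rw [trace_mul_entries]
    refine le_trans (norm_sum_le _ _) ?_
    refine Finset.sum_le_sum fun f _ => ?_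
    refine le_trans (norm_sum_le _ _) ?_
    refine Finset.sum_le_sum fun g _ => ?_
    rw [norm_mul]
    calc ‖T f g‖ * ‖σ g f‖
        ≤ 1 * ‖σ g f‖ :=
          mul_le_mul_of_nonneg_right (entry_abs_le_one hT1 hT2 f g)
            (norm_nonneg _)
      _ = ‖σ g f‖ := one_mul _
  have h2 := Complex.abs_re_le_norm ((T * σ).trace)
  have h3 := neg_abs_le (((T * σ).trace).re)
  linarith

lemma negLog2_antitone {s t : ℝ} (h : s ≤ t) : negLog2 t ≤ negLog2 s := by
  rw [negLog2, negLog2]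
  split_ifs with h1 h2 h2
  · exact le_refl ⊤
  · exact absurd (h.trans h1) h2
  · exact le_top
  · rw [EReal.coe_le_coe_iff]
    push_neg at h1 h2
    have := (Real.logb_le_logb (by norm_num : (1:ℝ) < 2) h2 h1).mpr h
    linarith

lemma DHe_le_of_betaSubset {ι κ : Type} [Fintype ι] [DecidableEq ι] [Fintype κ] [DecidableEq κ]
    (ε : ℝ) (ρ σ : MatC ι) (ρ' σ' : MatC κ)
    (hsub : betaSet ε ρ σ ⊆ betaSet ε ρ' σ') (hne : (betaSet ε ρ σ).Nonempty) :
    DHe ε ρ σ ≤ DHe ε ρ' σ' := by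
  rw [DHe, DHe]
  exact negLog2_antitone (csInf_le_csInf (betaSet_bddBelow ε ρ' σ') hne hsub)

end Stmt4Aux

theorem stmt4 {A B : Type} [Fintype A] [DecidableEq A] [Fintype B] [DecidableEq B]
    (N M : MatC A →ₗ[ℂ] MatC B) (hN : IsCPTP N) (hM : IsCPTP M)
    (ε : ℝ) (hε : ε ∈ Set.Ioo (0:ℝ) 1) (n : ℕ) (hn : 1 ≤ n)
    (R : Type) [Fintype R] [DecidableEq R]
    (ψ : MatC ((Fin n → R) × (Fin n → A))) (hψ : IsDensity ψ) :
    ∃ (R' : Type) (fR' : Fintype R') (dR' : DecidableEq R') (v : (Fin n → R' × A) → ℂ),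
      letI := fR'; letI := dR';
      (∑ f, Complex.normSq (v f) = 1) ∧
      (∀ (π : Equiv.Perm (Fin n)) (f : Fin n → R' × A), v (f ∘ π) = v f) ∧
      DHe ε (idTensor (Fin n → R) (powChan N n) ψ) (idTensor (Fin n → R) (powChan M n) ψ) ≤
        DHe ε (pairPow R' N n (Matrix.of fun f g => v f * star (v g)))
          (pairPow R' M n (Matrix.of fun f g => v f * star (v g))) := by
  classical
  obtain ⟨w, hpur⟩ := Stmt4Aux.exists_purif hψ.1
  have hw : ∑ p : (Fin n → R) × (Fin n → A), ∑ e : (Fin n → R) × (Fin n → A),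
      Complex.normSq (w p e) = 1 := by
    have h1 : ((∑ p : (Fin n → R) × (Fin n → A), ∑ e : (Fin n → R) × (Fin n → A),
        Complex.normSq (w p e) : ℝ) : ℂ) = 1 := by
      push_cast
      calc (∑ p : (Fin n → R) × (Fin n → A), ∑ e : (Fin n → R) × (Fin n → A),
            (Complex.normSq (w p e) : ℂ))
          = ∑ p : (Fin n → R) × (Fin n → A), ψ p p := by
            refine Finset.sum_congr rfl fun p _ => ?_
            rw [hpur p p]
            exact Finset.sum_congr rfl fun e _ => (Complex.mul_conj (w p e)).symm
        _ = ψ.trace := rfl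
        _ = 1 := hψ.2
    exact_mod_cast h1
  refine ⟨Stmt4Aux.RRef R A n, inferInstance, inferInstance, Stmt4Aux.uVec w, ?_, ?_, ?_⟩
  · exact Stmt4Aux.uVec_norm w hw
  · exact fun π f => Stmt4Aux.uVec_perm w π f
  · refine Stmt4Aux.DHe_le_of_betaSubset ε _ _ _ _ ?_ ?_
    · rintro x ⟨T, hT1, hT2, hTa, rfl⟩
      refine ⟨Stmt4Aux.liftT (A := A) T, Stmt4Aux.liftT_psd hT1,
        Stmt4Aux.liftT_one_sub_psd hT1.1 hT2, ?_, ?_⟩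
      · rw [show pairPow (Stmt4Aux.RRef R A n) N n
            (Matrix.of fun f g => Stmt4Aux.uVec w f * star (Stmt4Aux.uVec w g))
            = pairPow (Stmt4Aux.RRef R A n) N n
              (Matrix.of fun f g => Stmt4Aux.uVec w f * star (Stmt4Aux.uVec w g)) from rfl]
        rw [Stmt4Aux.trace_lift N T w ψ hpur]
        exact hTa
      · rw [Stmt4Aux.trace_lift M T w ψ hpur]
    · refine ⟨((1 * idTensor (Fin n → R) (powChan M n) ψ).trace).re, 1,
        Matrix.PosSemidef.one, by rw [sub_self]; exact Matrix.PosSemidef.zero, ?_, rfl⟩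
      rw [one_mul, Stmt4Aux.trace_idTensor (powChan N n)
        (Stmt4Aux.trace_powChan N hN.2 n) ψ, hψ.2]
      simp only [Complex.one_re]
      linarith [hε.1]

end
end

section
/- Let D be a state divergence (a map assigning to every pair of density matrices on any finite-dimensional system an extended real number, satisfying the data processing inequality D(E(ρ)‖E(σ)) ≤ D(ρ‖σ) for every quantum channel E) that is additive under tensor products: D(ρ₁⊗ρ₂ ‖ σ₁⊗σ₂) = D(ρ₁‖σ₁) + D(ρ₂‖σ₂). Then for all quantum channels N₁, M₁ from matrices on A₁ to matrices on B₁ and N₂, M₂ from matrices on A₂ to matrices on B₂, the amortized channel divergence is additive: D^A(N₁⊗N₂ ‖ M₁⊗M₂) = D^A(N₁‖M₁) + D^A(N₂‖M₂). -/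
open scoped Kronecker ComplexOrder Classical

noncomputable section

/-! ### Auxiliary infrastructure -/

section AuxInfra
open scoped Matrix

variable {R S ι τ κ' A B C : Type}

lemma MatC.psd_sum_blocks [Fintype ι] [Fintype τ] {X : MatC (ι × τ)}
    (hX : X.PosSemidef) :
    (Matrix.of fun i i' => ∑ t, X (i, t) (i', t) : MatC ι).PosSemidef := by
  have h : (Matrix.of fun i i' => ∑ t, X (i, t) (i', t) : MatC ι)
      = ∑ t : τ, X.submatrix (fun i => (i, t)) (fun i => (i, t)) := by
    ext i i'
    simp [Matrix.sum_apply]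
  rw [h]
  apply Finset.sum_induction _ _ (fun a b ha hb => ha.add hb)
  · exact Matrix.PosSemidef.zero
  · exact fun t _ => hX.submatrix _

lemma MatC.psd_kron [Fintype ι] [Fintype τ] {X : MatC ι} {Y : MatC τ}
    (hX : X.PosSemidef) (hY : Y.PosSemidef) : (X ⊗ₖ Y).PosSemidef := by
  obtain ⟨P, rfl⟩ : ∃ P : MatC ι, X = Pᴴ * P := by
    classical
    open scoped MatrixOrder in exact CStarAlgebra.nonneg_iff_eq_star_mul_self.mp hX.nonneg
  obtain ⟨Q, rfl⟩ : ∃ Q : MatC τ, Y = Qᴴ * Q := by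
    classical
    open scoped MatrixOrder in exact CStarAlgebra.nonneg_iff_eq_star_mul_self.mp hY.nonneg
  have h2 : (P ⊗ₖ Q)ᴴ = Pᴴ ⊗ₖ Qᴴ := by
    ext p q
    simp [Matrix.conjTranspose_apply]
  have h : (Pᴴ * P) ⊗ₖ (Qᴴ * Q) = (P ⊗ₖ Q)ᴴ * (P ⊗ₖ Q) := by
    rw [h2, ← Matrix.mul_kronecker_mul]
  rw [h]
  exact Matrix.posSemidef_conjTranspose_mul_self _

lemma IsDensity.kron [Fintype ι] [Fintype τ] {X : MatC ι} {Y : MatC τ}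
    (hX : IsDensity X) (hY : IsDensity Y) : IsDensity (X ⊗ₖ Y) :=
  ⟨MatC.psd_kron hX.1 hY.1, by rw [Matrix.trace_kronecker, hX.2, hY.2, one_mul]⟩

lemma idTensor_apply (N : MatC A →ₗ[ℂ] MatC B) (X : MatC (R × A)) (p q) :
    idTensor R N X p q = N (Matrix.of fun a a' => X (p.1, a) (q.1, a')) p.2 q.2 := rfl

lemma tensorId_apply (N : MatC A →ₗ[ℂ] MatC B) (X : MatC (A × R)) (p q) :
    tensorId R N X p q = N (Matrix.of fun a a' => X (a, p.2) (a', q.2)) p.1 q.1 := rfl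

/-- Reindexing channel along an equivalence. -/
def reChan (e : ι ≃ τ) : MatC ι →ₗ[ℂ] MatC τ :=
  (Matrix.reindexLinearEquiv ℂ ℂ e e).toLinearMap

lemma reChan_apply (e : ι ≃ τ) (X : MatC ι) :
    reChan e X = X.submatrix e.symm e.symm := rfl

lemma reChan_reChan (e : ι ≃ τ) (X : MatC ι) : reChan e.symm (reChan e X) = X := by
  ext i j
  simp [reChan_apply]

/-- Partial trace over the second factor. -/
def ptrChan (ι τ : Type) [Fintype τ] : MatC (ι × τ) →ₗ[ℂ] MatC ι where
  toFun X := Matrix.of fun i i' => ∑ t, X (i, t) (i', t)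
  map_add' X Y := by
    ext i i'
    simp [Finset.sum_add_distrib]
  map_smul' c X := by
    ext i i'
    simp [Finset.mul_sum]

/-- Replacement channel. -/
def repChan (ι τ : Type) [Fintype ι] (ω : MatC τ) : MatC ι →ₗ[ℂ] MatC τ where
  toFun X := X.trace • ω
  map_add' X Y := by simp [Matrix.trace_add, add_smul]
  map_smul' c X := by simp [Matrix.trace_smul, smul_smul]

end AuxInfra
section AuxCPTP

variable {R S ι τ A B C A' B' : Type}

lemma trace_idTensor [Fintype R] [Fintype A] [Fintype B] (N : MatC A →ₗ[ℂ] MatC B)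
    (hN : ∀ X : MatC A, (N X).trace = X.trace) (X : MatC (R × A)) :
    (idTensor R N X).trace = X.trace := by
  simp only [Matrix.trace, Matrix.diag, Fintype.sum_prod_type]
  refine Finset.sum_congr rfl fun r _ => ?_
  simpa [Matrix.trace, Matrix.diag, idTensor_apply] using hN (Matrix.of fun a a' => X (r, a) (r, a'))

lemma idTensor_idTensor (N : MatC A →ₗ[ℂ] MatC B) (X : MatC (S × (R × A))) :
    idTensor S (idTensor R N) X
      = (idTensor (S × R) N
          (X.submatrix (fun p : (S × R) × A => (p.1.1, (p.1.2, p.2)))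
            (fun p => (p.1.1, (p.1.2, p.2))))).submatrix
          (fun p : S × (R × B) => ((p.1, p.2.1), p.2.2)) (fun p => ((p.1, p.2.1), p.2.2)) :=
  rfl

lemma IsCPTP.idTensorC [Fintype R] [Fintype A] [Fintype B] {N : MatC A →ₗ[ℂ] MatC B}
    (hN : IsCPTP N) : IsCPTP (idTensor R N) := by
  constructor
  · intro S fS X hX
    rw [idTensor_idTensor]
    letI := fS
    exact (hN.1 (S × R) inferInstance _ (hX.submatrix _)).submatrix _
  · exact fun X => trace_idTensor N hN.2 X

lemma idTensor_reChan (e : ι ≃ τ) (X : MatC (R × ι)) :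
    idTensor R (reChan e) X
      = X.submatrix (fun p : R × τ => (p.1, e.symm p.2)) (fun p => (p.1, e.symm p.2)) := rfl

lemma IsCPTP.reChanC [Fintype ι] [Fintype τ] (e : ι ≃ τ) : IsCPTP (reChan (ι := ι) (τ := τ) e) := by
  constructor
  · intro S fS X hX
    rw [idTensor_reChan]
    letI := fS
    exact hX.submatrix _
  · intro X
    simp only [reChan_apply, Matrix.trace, Matrix.diag, Matrix.submatrix_apply]
    exact Equiv.sum_comp e.symm fun i => X i i

lemma IsCPTP.compC [Fintype A] [Fintype B] [Fintype C]
    {f : MatC B →ₗ[ℂ] MatC C} {g : MatC A →ₗ[ℂ] MatC B}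
    (hf : IsCPTP f) (hg : IsCPTP g) : IsCPTP (f ∘ₗ g) := by
  constructor
  · intro S fS X hX
    have h : idTensor S (f ∘ₗ g) X = idTensor S f (idTensor S g X) := rfl
    rw [h]
    exact hf.1 S fS _ (hg.1 S fS X hX)
  · intro X
    rw [LinearMap.comp_apply]
    exact (hf.2 _).trans (hg.2 X)

lemma tensorId_eq (N : MatC A →ₗ[ℂ] MatC B) :
    tensorId R N
      = reChan (Equiv.prodComm R B) ∘ₗ idTensor R N ∘ₗ reChan (Equiv.prodComm A R) := rfl

lemma IsCPTP.tensorIdC [Fintype R] [Fintype A] [Fintype B] {N : MatC A →ₗ[ℂ] MatC B}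
    (hN : IsCPTP N) : IsCPTP (tensorId R N) := by
  rw [tensorId_eq]
  exact (IsCPTP.reChanC _).compC ((hN.idTensorC).compC (IsCPTP.reChanC _))

lemma IsCPTP.tensorChanC [Fintype A] [Fintype B] [Fintype A'] [Fintype B']
    {N : MatC A →ₗ[ℂ] MatC B} {M : MatC A' →ₗ[ℂ] MatC B'}
    (hN : IsCPTP N) (hM : IsCPTP M) : IsCPTP (tensorChan N M) :=
  (hN.tensorIdC).compC (hM.idTensorC)

lemma IsCPTP.ptrChanC [Fintype ι] [Fintype τ] : IsCPTP (ptrChan ι τ) := by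
  constructor
  · intro S fS X hX
    letI := fS
    have h : idTensor S (ptrChan ι τ) X
        = Matrix.of fun p p' : S × ι =>
            ∑ t, (X.submatrix (fun u : (S × ι) × τ => (u.1.1, (u.1.2, u.2)))
              (fun u => (u.1.1, (u.1.2, u.2)))) (p, t) (p', t) := rfl
    rw [h]
    exact MatC.psd_sum_blocks (hX.submatrix _)
  · intro X
    simp only [Matrix.trace, Matrix.diag, ptrChan, LinearMap.coe_mk, AddHom.coe_mk,
      Matrix.of_apply, Fintype.sum_prod_type]

lemma IsCPTP.repChanC [Fintype ι] [Fintype τ] {ω : MatC τ} (hω : IsDensity ω) :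
    IsCPTP (repChan ι τ ω) := by
  constructor
  · intro S fS X hX
    letI := fS
    have h : idTensor S (repChan ι τ ω) X
        = (Matrix.of fun s s' : S => ∑ a, X (s, a) (s', a)) ⊗ₖ ω := by
      ext p q
      simp only [idTensor_apply, repChan, LinearMap.coe_mk, AddHom.coe_mk, Matrix.smul_apply,
        Matrix.trace, Matrix.diag, Matrix.of_apply, Matrix.kroneckerMap_apply, smul_eq_mul]
    rw [h]
    exact MatC.psd_kron (MatC.psd_sum_blocks hX) hω.1
  · intro X
    simp [repChan, Matrix.trace_smul, hω.2]

lemma IsCPTP.isDensity [Fintype A] [Fintype B] {N : MatC A →ₗ[ℂ] MatC B} (hN : IsCPTP N)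
    {ρ : MatC A} (hρ : IsDensity ρ) : IsDensity (N ρ) := by
  refine ⟨?_, by rw [hN.2, hρ.2]⟩
  have h2 := hN.1 Unit inferInstance (ρ.submatrix (Prod.snd : Unit × A → A) Prod.snd)
    (hρ.1.submatrix _)
  have h3 : N ρ = (idTensor Unit N (ρ.submatrix (Prod.snd : Unit × A → A) Prod.snd)).submatrix
      (fun b : B => (((), b) : Unit × B)) (fun b => ((), b)) := rfl
  rw [h3]
  exact h2.submatrix _

lemma uniformDensity (ι : Type) [Fintype ι] [Nonempty ι] [DecidableEq ι] :
    IsDensity (((Fintype.card ι : ℂ))⁻¹ • (1 : MatC ι)) := by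
  constructor
  · have h : ((Fintype.card ι : ℂ))⁻¹ • (1 : MatC ι)
        = Matrix.diagonal fun _ => ((Fintype.card ι : ℂ))⁻¹ := by
      ext i j
      by_cases hij : i = j <;>
        simp [Matrix.one_apply, Matrix.diagonal_apply, hij]
    rw [h]
    refine Matrix.PosSemidef.diagonal fun i => ?_
    have hc : ((((Fintype.card ι : ℝ))⁻¹ : ℝ) : ℂ) = ((Fintype.card ι : ℂ))⁻¹ := by
      rw [Complex.ofReal_inv, Complex.ofReal_natCast]
    show (0 : ℂ) ≤ ((Fintype.card ι : ℂ))⁻¹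
    rw [← hc, Complex.zero_le_real]
    positivity
  · rw [Matrix.trace_smul, Matrix.trace_one, smul_eq_mul]
    rw [inv_mul_cancel₀]
    exact_mod_cast Fintype.card_ne_zero

end AuxCPTP
section AuxEReal

lemma EReal.sub_ne_bot' {x y : EReal} (hx : x ≠ ⊥) (hy : y ≠ ⊤) : x - y ≠ ⊥ := by
  induction x using EReal.rec <;> induction y using EReal.rec <;> simp_all [sub_eq_add_neg, ← EReal.coe_neg, ← EReal.coe_add]

lemma EReal.top_sub_of_ne_top {y : EReal} (hy : y ≠ ⊤) : (⊤ : EReal) - y = ⊤ := by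
  induction y using EReal.rec <;> simp_all

lemma EReal.sub_eq_sub_add_sub {a b c : EReal} (hb : b ≠ ⊥) (hb' : b ≠ ⊤) :
    a - c = (a - b) + (b - c) := by
  lift b to ℝ using ⟨hb', hb⟩
  induction a using EReal.rec <;> induction c using EReal.rec
  · simp
  · simp
  · simp
  · simp [← EReal.coe_sub]
  · norm_cast; ring
  · simp [← EReal.coe_sub]
  · simp [← EReal.coe_sub]
  · simp [← EReal.coe_sub]
  · simp

lemma EReal.sub_add_sub_le {p₁ q₁ p₂ q₂ : EReal} (hp₁ : p₁ ≠ ⊥) (hq₁ : q₁ ≠ ⊥)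
    (hp₂ : p₂ ≠ ⊥) (hq₂ : q₂ ≠ ⊥) :
    (p₁ - q₁) + (p₂ - q₂) ≤ (p₁ + p₂) - (q₁ + q₂) := by
  by_cases hq₁' : q₁ = ⊤
  · simp [hq₁']
  by_cases hq₂' : q₂ = ⊤
  · simp [hq₂']
  lift q₁ to ℝ using ⟨hq₁', hq₁⟩
  lift q₂ to ℝ using ⟨hq₂', hq₂⟩
  by_cases hp₁' : p₁ = ⊤
  · subst hp₁'
    rw [EReal.top_sub_coe, EReal.top_add_of_ne_bot hp₂, ← EReal.coe_add,
      EReal.top_sub_coe, EReal.top_add_of_ne_bot]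
    exact EReal.sub_ne_bot' hp₂ (by simp)
  by_cases hp₂' : p₂ = ⊤
  · subst hp₂'
    rw [EReal.top_sub_coe, EReal.add_top_of_ne_bot (EReal.sub_ne_bot' hp₁ (by simp)),
      EReal.add_top_of_ne_bot hp₁, ← EReal.coe_add, EReal.top_sub_coe]
  lift p₁ to ℝ using ⟨hp₁', hp₁⟩
  lift p₂ to ℝ using ⟨hp₂', hp₂⟩
  refine le_of_eq ?_
  norm_cast
  ring

lemma EReal.sSup_add_sSup_le {A B : Set EReal} {c : EReal}
    (h : ∀ a ∈ A, ∀ b ∈ B, a + b ≤ c) : sSup A + sSup B ≤ c := by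
  refine EReal.add_le_of_forall_lt fun a' ha' b' hb' => ?_
  obtain ⟨a, ha, haa⟩ := lt_sSup_iff.mp ha'
  obtain ⟨b, hb, hbb⟩ := lt_sSup_iff.mp hb'
  exact le_trans (add_le_add haa.le hbb.le) (h a ha b hb)

end AuxEReal
section AuxD

/-- The data-processing inequality for a state divergence. -/
def DPIProp (D : StateDiv) : Prop :=
  ∀ (ι₁ ι₂ : Type) (f₁ : Fintype ι₁) (d₁ : DecidableEq ι₁)
      (f₂ : Fintype ι₂) (d₂ : DecidableEq ι₂) (E : MatC ι₁ →ₗ[ℂ] MatC ι₂),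
    letI := f₁; letI := d₁; letI := f₂; letI := d₂;
    IsCPTP E → ∀ ρ σ : MatC ι₁, IsDensity ρ → IsDensity σ →
      D ι₂ f₂ d₂ (E ρ) (E σ) ≤ D ι₁ f₁ d₁ ρ σ

/-- Additivity of a state divergence. -/
def AddProp (D : StateDiv) : Prop :=
  ∀ (ι₁ ι₂ : Type) (f₁ : Fintype ι₁) (d₁ : DecidableEq ι₁)
      (f₂ : Fintype ι₂) (d₂ : DecidableEq ι₂) (ρ₁ σ₁ : MatC ι₁) (ρ₂ σ₂ : MatC ι₂),
    letI := f₁; letI := d₁; letI := f₂; letI := d₂;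
    IsDensity ρ₁ → IsDensity σ₁ → IsDensity ρ₂ → IsDensity σ₂ →
      D (ι₁ × ι₂) inferInstance inferInstance (ρ₁ ⊗ₖ ρ₂) (σ₁ ⊗ₖ σ₂) =
        D ι₁ f₁ d₁ ρ₁ σ₁ + D ι₂ f₂ d₂ ρ₂ σ₂

lemma Dcongr (D : StateDiv) {ι : Type} (f f' : Fintype ι) (d d' : DecidableEq ι)
    (ρ σ : MatC ι) : D ι f d ρ σ = D ι f' d' ρ σ := by
  rw [Subsingleton.elim f f', Subsingleton.elim d d']

/-- The self-divergence constant. -/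
def kappa (D : StateDiv) : EReal := D Unit inferInstance inferInstance 1 1

lemma isDensity_one_unit : IsDensity (1 : MatC Unit) :=
  ⟨Matrix.PosSemidef.one, by simp⟩

variable {D : StateDiv}

lemma D_reindex (hdpi : DPIProp D) {ι τ : Type} [fι : Fintype ι] [dι : DecidableEq ι]
    [fτ : Fintype τ] [dτ : DecidableEq τ] (e : ι ≃ τ) {ρ σ : MatC ι}
    (hρ : IsDensity ρ) (hσ : IsDensity σ) :
    D τ fτ dτ (reChan e ρ) (reChan e σ) = D ι fι dι ρ σ := by
  refine le_antisymm (hdpi ι τ fι dι fτ dτ (reChan e) (IsCPTP.reChanC e) ρ σ hρ hσ) ?_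
  have h := hdpi τ ι fτ dτ fι dι (reChan e.symm) (IsCPTP.reChanC e.symm) (reChan e ρ)
    (reChan e σ) ((IsCPTP.reChanC e).isDensity hρ) ((IsCPTP.reChanC e).isDensity hσ)
  rwa [reChan_reChan, reChan_reChan] at h

lemma repChan_apply (ι τ : Type) [Fintype ι] (ω : MatC τ) (X : MatC ι) :
    repChan ι τ ω X = X.trace • ω := rfl

lemma kappa_le (hdpi : DPIProp D) {ι : Type} [fι : Fintype ι] [dι : DecidableEq ι]
    {ρ σ : MatC ι} (hρ : IsDensity ρ) (hσ : IsDensity σ) :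
    kappa D ≤ D ι fι dι ρ σ := by
  have h := hdpi ι Unit fι dι inferInstance inferInstance (repChan ι Unit 1)
    (IsCPTP.repChanC isDensity_one_unit) ρ σ hρ hσ
  rw [repChan_apply, repChan_apply, hρ.2, hσ.2, one_smul] at h
  exact le_trans (le_of_eq (Dcongr D _ _ _ _ _ _)) h

lemma D_self_eq_kappa (hdpi : DPIProp D) {ι : Type} [fι : Fintype ι] [dι : DecidableEq ι]
    {ρ : MatC ι} (hρ : IsDensity ρ) : D ι fι dι ρ ρ = kappa D := by
  refine le_antisymm ?_ (kappa_le hdpi hρ hρ)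
  have h := hdpi Unit ι inferInstance inferInstance fι dι (repChan Unit ι ρ)
    (IsCPTP.repChanC hρ) 1 1 isDensity_one_unit isDensity_one_unit
  rw [repChan_apply] at h
  have h1 : (1 : MatC Unit).trace = 1 := by simp
  rw [h1, one_smul] at h
  exact le_trans h (le_of_eq (Dcongr D _ _ _ _ _ _))

lemma kappa_self_add (hdpi : DPIProp D) (hadd : AddProp D) :
    kappa D = kappa D + kappa D := by
  have h := hadd Unit Unit inferInstance inferInstance inferInstance inferInstance 1 1 1 1
    isDensity_one_unit isDensity_one_unit isDensity_one_unit isDensity_one_unit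
  have h2 : D (Unit × Unit) inferInstance inferInstance
      ((1 : MatC Unit) ⊗ₖ (1 : MatC Unit)) ((1 : MatC Unit) ⊗ₖ (1 : MatC Unit)) = kappa D :=
    (Dcongr D _ _ _ _ _ _).trans
      (D_self_eq_kappa hdpi (isDensity_one_unit.kron isDensity_one_unit))
  rw [h2] at h
  rw [h]
  congr 1 <;> exact Dcongr D _ _ _ _ _ _

lemma kappa_cases (hdpi : DPIProp D) (hadd : AddProp D) :
    kappa D = ⊥ ∨ kappa D = ⊤ ∨ kappa D = 0 := by
  by_cases hb : kappa D = ⊥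
  · exact Or.inl hb
  by_cases ht : kappa D = ⊤
  · exact Or.inr (Or.inl ht)
  refine Or.inr (Or.inr ?_)
  lift kappa D to ℝ using ⟨ht, hb⟩ with r hr
  have h := kappa_self_add hdpi hadd
  rw [← hr] at h
  norm_cast at h ⊢
  linarith

lemma ptrChan_kron_one {ι : Type} [Fintype ι] (ρ : MatC ι) :
    ptrChan ι Unit (ρ ⊗ₖ (1 : MatC Unit)) = ρ := by
  ext i j
  show ∑ t : Unit, (ρ ⊗ₖ (1 : MatC Unit)) (i, t) (j, t) = ρ i j
  simp [Matrix.one_apply]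

lemma D_eq_bot_of_kappa_bot (hdpi : DPIProp D) (hadd : AddProp D) (hk : kappa D = ⊥)
    {ι : Type} [fι : Fintype ι] [dι : DecidableEq ι] {ρ σ : MatC ι}
    (hρ : IsDensity ρ) (hσ : IsDensity σ) : D ι fι dι ρ σ = ⊥ := by
  have h1 := hadd ι Unit fι dι inferInstance inferInstance ρ σ 1 1 hρ hσ
    isDensity_one_unit isDensity_one_unit
  have hkk : D Unit inferInstance inferInstance (1 : MatC Unit) 1 = kappa D :=
    Dcongr D _ _ _ _ _ _
  rw [hkk, hk, EReal.add_bot] at h1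
  have h2 := hdpi (ι × Unit) ι inferInstance inferInstance fι dι (ptrChan ι Unit)
    IsCPTP.ptrChanC (ρ ⊗ₖ 1) (σ ⊗ₖ 1) (hρ.kron isDensity_one_unit)
    (hσ.kron isDensity_one_unit)
  rw [ptrChan_kron_one, ptrChan_kron_one] at h2
  have h3 : D ι fι dι ρ σ ≤ (⊥ : EReal) :=
    le_trans (le_of_eq (Dcongr D _ _ _ _ _ _))
      (le_trans h2 (le_of_eq ((Dcongr D _ _ _ _ _ _).trans h1)))
  exact le_bot_iff.mp h3

lemma D_eq_top_of_kappa_top (hdpi : DPIProp D) (hk : kappa D = ⊤)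
    {ι : Type} [fι : Fintype ι] [dι : DecidableEq ι] {ρ σ : MatC ι}
    (hρ : IsDensity ρ) (hσ : IsDensity σ) : D ι fι dι ρ σ = ⊤ :=
  top_le_iff.mp (hk ▸ kappa_le hdpi hρ hσ)

lemma D_ne_bot_of_kappa_zero (hdpi : DPIProp D) (hk : kappa D = 0)
    {ι : Type} [fι : Fintype ι] [dι : DecidableEq ι] {ρ σ : MatC ι}
    (hρ : IsDensity ρ) (hσ : IsDensity σ) : D ι fι dι ρ σ ≠ ⊥ := by
  intro h
  have := kappa_le hdpi hρ hσ
  rw [h, hk] at this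
  exact absurd (le_bot_iff.mp this) (by norm_num)

end AuxD
section AuxStruct

variable {R R₁ R₂ A₁ B₁ A₂ B₂ : Type}

/-- `(R × X) × Y ≃ (R × Y) × X`. -/
def eqMid (R X Y : Type) : (R × X) × Y ≃ (R × Y) × X where
  toFun p := ((p.1.1, p.2), p.1.2)
  invFun p := ((p.1.1, p.2), p.1.2)
  left_inv p := rfl
  right_inv p := rfl

/-- `(R × Y) × X ≃ R × (X × Y)`. -/
def eqOut (R X Y : Type) : (R × Y) × X ≃ R × (X × Y) where
  toFun p := (p.1.1, (p.2, p.1.2))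
  invFun q := ((q.1, q.2.2), q.2.1)
  left_inv p := rfl
  right_inv q := rfl

/-- Pairing equivalence. -/
def eqPair (R₁ A₁ R₂ A₂ : Type) : (R₁ × A₁) × (R₂ × A₂) ≃ (R₁ × R₂) × (A₁ × A₂) where
  toFun p := ((p.1.1, p.2.1), (p.1.2, p.2.2))
  invFun q := ((q.1.1, q.2.1), (q.1.2, q.2.2))
  left_inv p := rfl
  right_inv q := rfl

lemma idTensor_tensorChan_eq (N₁ : MatC A₁ →ₗ[ℂ] MatC B₁) (N₂ : MatC A₂ →ₗ[ℂ] MatC B₂)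
    (ψ : MatC (R × (A₁ × A₂))) :
    idTensor R (tensorChan N₁ N₂) ψ
      = reChan (eqOut R B₁ B₂)
          (idTensor (R × B₂) N₁
            (reChan (eqMid R A₁ B₂)
              (idTensor (R × A₁) N₂
                (reChan (Equiv.prodAssoc R A₁ A₂).symm ψ)))) := rfl

lemma idTensor_tensorChan_kron (N₁ : MatC A₁ →ₗ[ℂ] MatC B₁) (N₂ : MatC A₂ →ₗ[ℂ] MatC B₂)
    (ψ₁ : MatC (R₁ × A₁)) (ψ₂ : MatC (R₂ × A₂)) :
    idTensor (R₁ × R₂) (tensorChan N₁ N₂) (reChan (eqPair R₁ A₁ R₂ A₂) (ψ₁ ⊗ₖ ψ₂))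
      = reChan (eqPair R₁ B₁ R₂ B₂) ((idTensor R₁ N₁ ψ₁) ⊗ₖ (idTensor R₂ N₂ ψ₂)) := by
  ext p q
  obtain ⟨⟨r₁, r₂⟩, b₁, b₂⟩ := p
  obtain ⟨⟨r₁', r₂'⟩, b₁', b₂'⟩ := q
  show N₁ (Matrix.of fun a a' => N₂ (Matrix.of fun c c' =>
      ψ₁ (r₁, a) (r₁', a') * ψ₂ (r₂, c) (r₂', c')) b₂ b₂') b₁ b₁'
    = N₁ (Matrix.of fun a a' => ψ₁ (r₁, a) (r₁', a')) b₁ b₁'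
      * N₂ (Matrix.of fun c c' => ψ₂ (r₂, c) (r₂', c')) b₂ b₂'
  have hinner : ∀ a a', (Matrix.of fun c c' =>
        ψ₁ (r₁, a) (r₁', a') * ψ₂ (r₂, c) (r₂', c'))
      = ψ₁ (r₁, a) (r₁', a') • (Matrix.of fun c c' => ψ₂ (r₂, c) (r₂', c')) := by
    intro a a'
    ext c c'
    simp
  have houter : (Matrix.of fun a a' => N₂ (Matrix.of fun c c' =>
        ψ₁ (r₁, a) (r₁', a') * ψ₂ (r₂, c) (r₂', c')) b₂ b₂')
      = N₂ (Matrix.of fun c c' => ψ₂ (r₂, c) (r₂', c')) b₂ b₂'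
        • (Matrix.of fun a a' => ψ₁ (r₁, a) (r₁', a')) := by
    ext a a'
    rw [Matrix.of_apply, hinner a a', map_smul]
    simp [mul_comm]
  rw [houter, map_smul]
  simp [mul_comm]

end AuxStruct
section AuxMain

lemma not_isDensity_of_isEmpty {ι : Type} [Fintype ι] [IsEmpty ι] (ρ : MatC ι) :
    ¬ IsDensity ρ := by
  rintro ⟨-, h⟩
  rw [Matrix.trace] at h
  simp at h

lemma amort_eq_bot_of_isEmpty {D : StateDiv} {A B : Type} [Fintype A] [DecidableEq A]
    [Fintype B] [DecidableEq B] (hA : IsEmpty A) (N M : MatC A →ₗ[ℂ] MatC B) :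
    amortChanDiv D N M = ⊥ := by
  rw [amortChanDiv, sSup_eq_bot]
  rintro x ⟨R, fR, dR, ψ, φ, hψ, hφ, rfl⟩
  exact absurd hψ (not_isDensity_of_isEmpty ψ)

lemma amort_eq_bot_of_const {D : StateDiv}
    (hconst : ∀ (ι : Type) (f : Fintype ι) (d : DecidableEq ι) (ρ σ : MatC ι),
      @IsDensity ι f ρ → @IsDensity ι f σ → D ι f d ρ σ = kappa D)
    (hκ : kappa D - kappa D = ⊥) {A B : Type} [Fintype A] [DecidableEq A]
    [Fintype B] [DecidableEq B] {N M : MatC A →ₗ[ℂ] MatC B}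
    (hN : IsCPTP N) (hM : IsCPTP M) : amortChanDiv D N M = ⊥ := by
  rw [amortChanDiv, sSup_eq_bot]
  rintro x ⟨R, fR, dR, ψ, φ, hψ, hφ, rfl⟩
  letI := fR; letI := dR
  rw [hconst _ _ _ _ _ ((hN.idTensorC).isDensity hψ) ((hM.idTensorC).isDensity hφ),
    hconst _ _ _ _ _ hψ hφ, hκ]

lemma le_amort {D : StateDiv} {A B : Type} [fA : Fintype A] [dA : DecidableEq A]
    [fB : Fintype B] [dB : DecidableEq B] (N M : MatC A →ₗ[ℂ] MatC B)
    (R : Type) [fR : Fintype R] [dR : DecidableEq R] (ψ φ : MatC (R × A))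
    (hψ : IsDensity ψ) (hφ : IsDensity φ) :
    D (R × B) inferInstance inferInstance (idTensor R N ψ) (idTensor R M φ)
      - D (R × A) inferInstance inferInstance ψ φ ≤ amortChanDiv D N M :=
  le_sSup ⟨R, fR, dR, ψ, φ, hψ, hφ, rfl⟩

lemma final_le {a b b' c c' d₁ d₂ : EReal} (hbb : b = b') (hcc : c = c')
    (h0 : 0 ≤ b) (hc0 : 0 ≤ c) (hd₁ : 0 ≤ d₁)
    (h₁ : a - b ≤ d₁) (h₂ : b' - c' ≤ d₂) : a - c ≤ d₁ + d₂ := by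
  subst hbb; subst hcc
  by_cases hct : c = ⊤
  · simp [hct]
  by_cases hbt : b = ⊤
  · have hd₂ : d₂ = ⊤ := by
      refine top_le_iff.mp ?_
      refine le_trans (le_of_eq (EReal.top_sub_of_ne_top hct).symm) ?_
      rw [← hbt]
      exact h₂
    rw [hd₂, EReal.add_top_of_ne_bot]
    · exact le_top
    · intro h
      rw [h] at hd₁
      exact absurd (le_bot_iff.mp hd₁) (by norm_num)
  · rw [EReal.sub_eq_sub_add_sub (b := b) (fun h => by rw [h] at h0; simp at h0) hbt]
    exact add_le_add h₁ h₂

end AuxMain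
theorem stmt7 (D : StateDiv)
    (hdpi : ∀ (ι₁ ι₂ : Type) (f₁ : Fintype ι₁) (d₁ : DecidableEq ι₁)
        (f₂ : Fintype ι₂) (d₂ : DecidableEq ι₂) (E : MatC ι₁ →ₗ[ℂ] MatC ι₂),
      letI := f₁; letI := d₁; letI := f₂; letI := d₂;
      IsCPTP E → ∀ ρ σ : MatC ι₁, IsDensity ρ → IsDensity σ →
        D ι₂ f₂ d₂ (E ρ) (E σ) ≤ D ι₁ f₁ d₁ ρ σ)
    (hadd : ∀ (ι₁ ι₂ : Type) (f₁ : Fintype ι₁) (d₁ : DecidableEq ι₁)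
        (f₂ : Fintype ι₂) (d₂ : DecidableEq ι₂) (ρ₁ σ₁ : MatC ι₁) (ρ₂ σ₂ : MatC ι₂),
      letI := f₁; letI := d₁; letI := f₂; letI := d₂;
      IsDensity ρ₁ → IsDensity σ₁ → IsDensity ρ₂ → IsDensity σ₂ →
        D (ι₁ × ι₂) inferInstance inferInstance (ρ₁ ⊗ₖ ρ₂) (σ₁ ⊗ₖ σ₂) =
          D ι₁ f₁ d₁ ρ₁ σ₁ + D ι₂ f₂ d₂ ρ₂ σ₂)
    {A₁ B₁ A₂ B₂ : Type} [Fintype A₁] [DecidableEq A₁] [Fintype B₁] [DecidableEq B₁]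
    [Fintype A₂] [DecidableEq A₂] [Fintype B₂] [DecidableEq B₂]
    (N₁ M₁ : MatC A₁ →ₗ[ℂ] MatC B₁) (N₂ M₂ : MatC A₂ →ₗ[ℂ] MatC B₂)
    (hN₁ : IsCPTP N₁) (hM₁ : IsCPTP M₁) (hN₂ : IsCPTP N₂) (hM₂ : IsCPTP M₂) :
    amortChanDiv D (tensorChan N₁ N₂) (tensorChan M₁ M₂) =
      amortChanDiv D N₁ M₁ + amortChanDiv D N₂ M₂ := by
  classical
  have hdpi' : DPIProp D := hdpi
  have hadd' : AddProp D := hadd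
  by_cases hA₁ : Nonempty A₁
  swap
  · haveI : IsEmpty A₁ := not_nonempty_iff.mp hA₁
    rw [amort_eq_bot_of_isEmpty inferInstance N₁ M₁,
      amort_eq_bot_of_isEmpty inferInstance (tensorChan N₁ N₂) (tensorChan M₁ M₂),
      EReal.bot_add]
  by_cases hA₂ : Nonempty A₂
  swap
  · haveI : IsEmpty A₂ := not_nonempty_iff.mp hA₂
    rw [amort_eq_bot_of_isEmpty inferInstance N₂ M₂,
      amort_eq_bot_of_isEmpty inferInstance (tensorChan N₁ N₂) (tensorChan M₁ M₂),
      EReal.add_bot]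
  rcases kappa_cases hdpi' hadd' with hk | hk | hk
  · -- kappa = ⊥ : everything is ⊥
    have hconst : ∀ (ι : Type) (f : Fintype ι) (d : DecidableEq ι) (ρ σ : MatC ι),
        @IsDensity ι f ρ → @IsDensity ι f σ → D ι f d ρ σ = kappa D := fun ι f d ρ σ hρ hσ =>
      (D_eq_bot_of_kappa_bot hdpi' hadd' hk (fι := f) (dι := d) hρ hσ).trans hk.symm
    have hκ : kappa D - kappa D = ⊥ := by rw [hk]; exact EReal.bot_sub _
    rw [amort_eq_bot_of_const hconst hκ (hN₁.tensorChanC hN₂) (hM₁.tensorChanC hM₂),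
      amort_eq_bot_of_const hconst hκ hN₁ hM₁, amort_eq_bot_of_const hconst hκ hN₂ hM₂,
      EReal.bot_add]
  · -- kappa = ⊤ : everything is ⊤
    have hconst : ∀ (ι : Type) (f : Fintype ι) (d : DecidableEq ι) (ρ σ : MatC ι),
        @IsDensity ι f ρ → @IsDensity ι f σ → D ι f d ρ σ = kappa D := fun ι f d ρ σ hρ hσ =>
      (D_eq_top_of_kappa_top hdpi' hk (fι := f) (dι := d) hρ hσ).trans hk.symm
    have hκ : kappa D - kappa D = ⊥ := by rw [hk]; exact EReal.sub_top _
    rw [amort_eq_bot_of_const hconst hκ (hN₁.tensorChanC hN₂) (hM₁.tensorChanC hM₂),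
      amort_eq_bot_of_const hconst hκ hN₁ hM₁, amort_eq_bot_of_const hconst hκ hN₂ hM₂,
      EReal.bot_add]
  · -- kappa = 0 : the main case
    have hd₁0 : (0 : EReal) ≤ amortChanDiv D N₁ M₁ := by
      have hω := uniformDensity (Unit × A₁)
      refine le_trans ?_ (le_amort (D := D) N₁ M₁ Unit _ _ hω hω)
      rw [D_self_eq_kappa hdpi' hω, hk, sub_eq_add_neg, neg_zero, add_zero]
      exact hk ▸ kappa_le hdpi' ((hN₁.idTensorC).isDensity hω) ((hM₁.idTensorC).isDensity hω)
    refine le_antisymm ?_ ?_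
    · -- subadditivity via the chain rule
      refine sSup_le ?_
      rintro x ⟨R, fR, dR, ψ, φ, hψ, hφ, rfl⟩
      letI := fR; letI := dR
      set e₀ := (Equiv.prodAssoc R A₁ A₂).symm with he₀
      set e₁ := eqMid R A₁ B₂ with he₁
      have hψα : IsDensity (reChan e₀ ψ) := (IsCPTP.reChanC e₀).isDensity hψ
      have hφα : IsDensity (reChan e₀ φ) := (IsCPTP.reChanC e₀).isDensity hφ
      have hψm : IsDensity (idTensor (R × A₁) N₂ (reChan e₀ ψ)) :=
        (hN₂.idTensorC).isDensity hψα
      have hφm : IsDensity (idTensor (R × A₁) M₂ (reChan e₀ φ)) :=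
        (hM₂.idTensorC).isDensity hφα
      have hψβ : IsDensity (reChan e₁ (idTensor (R × A₁) N₂ (reChan e₀ ψ))) :=
        (IsCPTP.reChanC e₁).isDensity hψm
      have hφβ : IsDensity (reChan e₁ (idTensor (R × A₁) M₂ (reChan e₀ φ))) :=
        (IsCPTP.reChanC e₁).isDensity hφm
      have hmem₂ := le_amort (D := D) N₂ M₂ (R × A₁) (reChan e₀ ψ) (reChan e₀ φ) hψα hφα
      have hmem₁ := le_amort (D := D) N₁ M₁ (R × B₂)
        (reChan e₁ (idTensor (R × A₁) N₂ (reChan e₀ ψ)))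
        (reChan e₁ (idTensor (R × A₁) M₂ (reChan e₀ φ))) hψβ hφβ
      rw [idTensor_tensorChan_eq N₁ N₂ ψ, idTensor_tensorChan_eq M₁ M₂ φ,
        D_reindex hdpi' (eqOut R B₁ B₂) ((hN₁.idTensorC).isDensity hψβ)
          ((hM₁.idTensorC).isDensity hφβ),
        ← D_reindex hdpi' e₀ hψ hφ]
      rw [D_reindex hdpi' e₁ hψm hφm] at hmem₁
      refine final_le (Dcongr D _ _ _ _ _ _) (Dcongr D _ _ _ _ _ _) ?_ ?_ hd₁0 hmem₁ hmem₂
      · exact hk ▸ kappa_le hdpi' hψm hφm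
      · exact hk ▸ kappa_le hdpi' hψα hφα
    · -- superadditivity via tensoring
      refine EReal.sSup_add_sSup_le ?_
      rintro x₁ ⟨R₁, fR₁, dR₁, ψ₁, φ₁, hψ₁, hφ₁, rfl⟩ x₂ ⟨R₂, fR₂, dR₂, ψ₂, φ₂, hψ₂, hφ₂, rfl⟩
      letI := fR₁; letI := dR₁; letI := fR₂; letI := dR₂
      have hΨ : IsDensity (reChan (eqPair R₁ A₁ R₂ A₂) (ψ₁ ⊗ₖ ψ₂)) :=
        (IsCPTP.reChanC _).isDensity (hψ₁.kron hψ₂)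
      have hΦ : IsDensity (reChan (eqPair R₁ A₁ R₂ A₂) (φ₁ ⊗ₖ φ₂)) :=
        (IsCPTP.reChanC _).isDensity (hφ₁.kron hφ₂)
      have hmem := le_amort (D := D) (tensorChan N₁ N₂) (tensorChan M₁ M₂) (R₁ × R₂)
        (reChan (eqPair R₁ A₁ R₂ A₂) (ψ₁ ⊗ₖ ψ₂)) (reChan (eqPair R₁ A₁ R₂ A₂) (φ₁ ⊗ₖ φ₂)) hΨ hΦ
      rw [idTensor_tensorChan_kron N₁ N₂ ψ₁ ψ₂, idTensor_tensorChan_kron M₁ M₂ φ₁ φ₂,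
        D_reindex hdpi' (eqPair R₁ B₁ R₂ B₂)
          (((hN₁.idTensorC).isDensity hψ₁).kron ((hN₂.idTensorC).isDensity hψ₂))
          (((hM₁.idTensorC).isDensity hφ₁).kron ((hM₂.idTensorC).isDensity hφ₂)),
        D_reindex hdpi' (eqPair R₁ A₁ R₂ A₂) (hψ₁.kron hψ₂) (hφ₁.kron hφ₂)] at hmem
      rw [hadd' (R₁ × B₁) (R₂ × B₂) inferInstance inferInstance inferInstance inferInstance
          _ _ _ _ ((hN₁.idTensorC).isDensity hψ₁) ((hM₁.idTensorC).isDensity hφ₁)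
          ((hN₂.idTensorC).isDensity hψ₂) ((hM₂.idTensorC).isDensity hφ₂),
        hadd' (R₁ × A₁) (R₂ × A₂) inferInstance inferInstance inferInstance inferInstance
          _ _ _ _ hψ₁ hφ₁ hψ₂ hφ₂] at hmem
      refine le_trans ?_ hmem
      refine le_trans (le_of_eq ?_) (EReal.sub_add_sub_le
        (D_ne_bot_of_kappa_zero hdpi' hk ((hN₁.idTensorC).isDensity hψ₁)
          ((hM₁.idTensorC).isDensity hφ₁))
        (D_ne_bot_of_kappa_zero hdpi' hk hψ₁ hφ₁)
        (D_ne_bot_of_kappa_zero hdpi' hk ((hN₂.idTensorC).isDensity hψ₂)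
          ((hM₂.idTensorC).isDensity hφ₂))
        (D_ne_bot_of_kappa_zero hdpi' hk hψ₂ hφ₂))
      congr 1 <;> congr 1 <;> exact Dcongr D _ _ _ _ _ _

end
end
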